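/- The minimum classical extension of IA₁ + FT₁ is IA₁ + FT₁ + GDK: IA₁ + FT₁ + GDK proves the negative translation (FT₁)^g, and GDK is provable in IA₁ + (FT₁)^g. -/

import Mathlib

/-!
A deep embedding of the two-sorted language of intuitionistic analysis
(Kleene-Vesley), with number variables and one-place function (choice
sequence) variables, finitely many constants for primitive recursive
function(al)s (successor, +, ·, truncated subtraction ∸, pairing ⟨·,·⟩,
finite-sequence coding: concatenation *, singleton code ⟨s⟩, empty code ⟨⟩,
length lh, the Seq predicate, Kleene's T-predicate and U-function, and the
course-of-values functional ᾱ(x)), λ-abstraction with λ-reduction,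
intuitionistic two-sorted predicate logic, the Gödel–Gentzen negative
translation g, and the axiom schemas of the paper
"Calibrating the negative interpretation" (J.R. Moschovakis).
-/

namespace NegInterp

/-! Terms (type 0) and functors (type 1). -/
mutual
inductive Term : Type
  | var   : ℕ → Term
  | zero  : Term
  | succ  : Term → Term
  | add   : Term → Term → Term
  | mul   : Term → Term → Term
  | sub   : Term → Term → Term           -- truncated subtraction
  | pair  : Term → Term → Term           -- ⟨s,t⟩
  | cat   : Term → Term → Term           -- concatenation w ∗ v of sequence codes
  | sing  : Term → Term                  -- ⟨s⟩
  | empt  : Term                         -- ⟨ ⟩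
  | lh    : Term → Term                  -- length of a sequence code
  | seqc  : Term → Term                  -- characteristic function of Seq
  | kT    : Term → Term → Term → Term    -- characteristic function of Kleene's T
  | kU    : Term → Term                  -- Kleene's result-extraction U
  | app   : Func → Term → Term           -- φ(t)
  | bar   : Func → Term → Term           -- ᾱ(t), the code of (α(0),…,α(t−1))
inductive Func : Type
  | fvar : ℕ → Func
  | lam  : ℕ → Term → Func               -- λx.t
end

open Term Func

/-- Coding of finite sequences of naturals by naturals (every natural is a code). -/
def listCode (l : List ℕ) : ℕ := Encodable.encode l
def listDec (n : ℕ) : List ℕ := Denumerable.ofNat (List ℕ) n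

/-- Kleene's T-predicate: y codes a (fuel, value) pair witnessing that the
machine with code e halts on input x with the given value. -/
def KTmeta (e x y : ℕ) : Prop :=
  Nat.Partrec.Code.evaln y.unpair.1 (Denumerable.ofNat Nat.Partrec.Code e) x = some y.unpair.2

instance (e x y : ℕ) : Decidable (KTmeta e x y) := by unfold KTmeta; infer_instance

/-! Standard (full classical ω-model) interpretation of terms and functors,
used only to state the defining axioms of the primitive recursive constants. -/
mutual
def evalT (ρ : ℕ → ℕ) (σ : ℕ → ℕ → ℕ) : Term → ℕ
  | .var n => ρ n
  | .zero => 0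
  | .succ t => evalT ρ σ t + 1
  | .add s t => evalT ρ σ s + evalT ρ σ t
  | .mul s t => evalT ρ σ s * evalT ρ σ t
  | .sub s t => evalT ρ σ s - evalT ρ σ t
  | .pair s t => Nat.pair (evalT ρ σ s) (evalT ρ σ t)
  | .cat s t => listCode (listDec (evalT ρ σ s) ++ listDec (evalT ρ σ t))
  | .sing t => listCode [evalT ρ σ t]
  | .empt => listCode []
  | .lh t => (listDec (evalT ρ σ t)).length
  | .seqc _ => 0      -- under this coding every number codes a finite sequence
  | .kT e x y => if KTmeta (evalT ρ σ e) (evalT ρ σ x) (evalT ρ σ y) then 0 else 1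
  | .kU y => (Nat.unpair (evalT ρ σ y)).2
  | .app φ t => evalF ρ σ φ (evalT ρ σ t)
  | .bar φ t => listCode ((List.range (evalT ρ σ t)).map (evalF ρ σ φ))
def evalF (ρ : ℕ → ℕ) (σ : ℕ → ℕ → ℕ) : Func → ℕ → ℕ
  | .fvar n => σ n
  | .lam x t => fun m => evalT (Function.update ρ x m) σ t
end

/-! Free number variables of a term / functor. -/
mutual
def tFN : Term → Set ℕ
  | .var n => {n}
  | .zero => ∅
  | .empt => ∅
  | .succ t => tFN t
  | .sing t => tFN t
  | .lh t => tFN t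
  | .seqc t => tFN t
  | .kU t => tFN t
  | .add s t => tFN s ∪ tFN t
  | .mul s t => tFN s ∪ tFN t
  | .sub s t => tFN s ∪ tFN t
  | .pair s t => tFN s ∪ tFN t
  | .cat s t => tFN s ∪ tFN t
  | .kT e x y => tFN e ∪ tFN x ∪ tFN y
  | .app φ t => fFN φ ∪ tFN t
  | .bar φ t => fFN φ ∪ tFN t
def fFN : Func → Set ℕ
  | .fvar _ => ∅
  | .lam x t => tFN t \ {x}
end

/-! Free function variables of a term / functor. -/
mutual
def tFF : Term → Set ℕ
  | .var _ => ∅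
  | .zero => ∅
  | .empt => ∅
  | .succ t => tFF t
  | .sing t => tFF t
  | .lh t => tFF t
  | .seqc t => tFF t
  | .kU t => tFF t
  | .add s t => tFF s ∪ tFF t
  | .mul s t => tFF s ∪ tFF t
  | .sub s t => tFF s ∪ tFF t
  | .pair s t => tFF s ∪ tFF t
  | .cat s t => tFF s ∪ tFF t
  | .kT e x y => tFF e ∪ tFF x ∪ tFF y
  | .app φ t => fFF φ ∪ tFF t
  | .bar φ t => fFF φ ∪ tFF t
def fFF : Func → Set ℕ
  | .fvar a => {a}
  | .lam _ t => tFF t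
end

/-! Substitution of a term for a number variable in terms / functors. -/
mutual
def tSubN (n : ℕ) (u : Term) : Term → Term
  | .var m => if m = n then u else .var m
  | .zero => .zero
  | .empt => .empt
  | .succ t => .succ (tSubN n u t)
  | .sing t => .sing (tSubN n u t)
  | .lh t => .lh (tSubN n u t)
  | .seqc t => .seqc (tSubN n u t)
  | .kU t => .kU (tSubN n u t)
  | .add s t => .add (tSubN n u s) (tSubN n u t)
  | .mul s t => .mul (tSubN n u s) (tSubN n u t)
  | .sub s t => .sub (tSubN n u s) (tSubN n u t)
  | .pair s t => .pair (tSubN n u s) (tSubN n u t)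
  | .cat s t => .cat (tSubN n u s) (tSubN n u t)
  | .kT e x y => .kT (tSubN n u e) (tSubN n u x) (tSubN n u y)
  | .app φ t => .app (fSubN n u φ) (tSubN n u t)
  | .bar φ t => .bar (fSubN n u φ) (tSubN n u t)
def fSubN (n : ℕ) (u : Term) : Func → Func
  | .fvar a => .fvar a
  | .lam x t => if x = n then .lam x t else .lam x (tSubN n u t)
end

/-! Substitution of a functor for a function variable in terms / functors. -/
mutual
def tSubF (a : ℕ) (ψ : Func) : Term → Term
  | .var m => .var m
  | .zero => .zero
  | .empt => .empt
  | .succ t => .succ (tSubF a ψ t)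
  | .sing t => .sing (tSubF a ψ t)
  | .lh t => .lh (tSubF a ψ t)
  | .seqc t => .seqc (tSubF a ψ t)
  | .kU t => .kU (tSubF a ψ t)
  | .add s t => .add (tSubF a ψ s) (tSubF a ψ t)
  | .mul s t => .mul (tSubF a ψ s) (tSubF a ψ t)
  | .sub s t => .sub (tSubF a ψ s) (tSubF a ψ t)
  | .pair s t => .pair (tSubF a ψ s) (tSubF a ψ t)
  | .cat s t => .cat (tSubF a ψ s) (tSubF a ψ t)
  | .kT e x y => .kT (tSubF a ψ e) (tSubF a ψ x) (tSubF a ψ y)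
  | .app φ t => .app (fSubF a ψ φ) (tSubF a ψ t)
  | .bar φ t => .bar (fSubF a ψ φ) (tSubF a ψ t)
def fSubF (a : ℕ) (ψ : Func) : Func → Func
  | .fvar b => if b = a then ψ else .fvar b
  | .lam x t => .lam x (tSubF a ψ t)
end

/-! "u is free for (the number variable) n" in a term/functor
(no free occurrence of n lies within a λ binding a variable free in u). -/
mutual
def tFForN (u : Term) (n : ℕ) : Term → Prop
  | .var _ => True
  | .zero => True
  | .empt => True
  | .succ t => tFForN u n t
  | .sing t => tFForN u n t
  | .lh t => tFForN u n t
  | .seqc t => tFForN u n t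
  | .kU t => tFForN u n t
  | .add s t => tFForN u n s ∧ tFForN u n t
  | .mul s t => tFForN u n s ∧ tFForN u n t
  | .sub s t => tFForN u n s ∧ tFForN u n t
  | .pair s t => tFForN u n s ∧ tFForN u n t
  | .cat s t => tFForN u n s ∧ tFForN u n t
  | .kT e x y => tFForN u n e ∧ tFForN u n x ∧ tFForN u n y
  | .app φ t => fFForN u n φ ∧ tFForN u n t
  | .bar φ t => fFForN u n φ ∧ tFForN u n t
def fFForN (u : Term) (n : ℕ) : Func → Prop
  | .fvar _ => True
  | .lam x t => x = n ∨ n ∉ tFN t ∨ (x ∉ tFN u ∧ tFForN u n t)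
end

/-! "ψ is free for (the function variable) a" in a term/functor. -/
mutual
def tFForF (ψ : Func) (a : ℕ) : Term → Prop
  | .var _ => True
  | .zero => True
  | .empt => True
  | .succ t => tFForF ψ a t
  | .sing t => tFForF ψ a t
  | .lh t => tFForF ψ a t
  | .seqc t => tFForF ψ a t
  | .kU t => tFForF ψ a t
  | .add s t => tFForF ψ a s ∧ tFForF ψ a t
  | .mul s t => tFForF ψ a s ∧ tFForF ψ a t
  | .sub s t => tFForF ψ a s ∧ tFForF ψ a t
  | .pair s t => tFForF ψ a s ∧ tFForF ψ a t
  | .cat s t => tFForF ψ a s ∧ tFForF ψ a t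
  | .kT e x y => tFForF ψ a e ∧ tFForF ψ a x ∧ tFForF ψ a y
  | .app φ t => fFForF ψ a φ ∧ tFForF ψ a t
  | .bar φ t => fFForF ψ a φ ∧ tFForF ψ a t
def fFForF (ψ : Func) (a : ℕ) : Func → Prop
  | .fvar _ => True
  | .lam x t => a ∉ tFF t ∨ (x ∉ fFN ψ ∧ tFForF ψ a t)
end

/-- Formulas of the two-sorted language; prime formulas are equations between
terms of type 0 (equality of type 1 is defined extensionally). -/
inductive Formula : Type
  | eq     : Term → Term → Formula
  | falsum : Formula
  | and    : Formula → Formula → Formula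
  | or     : Formula → Formula → Formula
  | imp    : Formula → Formula → Formula
  | allN   : ℕ → Formula → Formula
  | exN    : ℕ → Formula → Formula
  | allF   : ℕ → Formula → Formula
  | exF    : ℕ → Formula → Formula

namespace Formula

/-- ¬A -/
def neg (A : Formula) : Formula := A.imp .falsum
/-- ¬¬A -/
def nneg (A : Formula) : Formula := neg (neg A)
/-- A ↔ B -/
def iff (A B : Formula) : Formula := (A.imp B).and (B.imp A)

end Formula

open Formula

/-- s ≤ t, expressed by the primitive recursive constant ∸. -/
def tle (s t : Term) : Formula := .eq (Term.sub s t) Term.zero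
/-- s < t -/
def tlt (s t : Term) : Formula := tle (Term.succ s) t
/-- Seq(w) : w codes a finite sequence. -/
def seqF (t : Term) : Formula := .eq (Term.seqc t) Term.zero

/-- Free number variables of a formula. -/
def freeN : Formula → Set ℕ
  | .eq s t => tFN s ∪ tFN t
  | .falsum => ∅
  | .and A B => freeN A ∪ freeN B
  | .or A B => freeN A ∪ freeN B
  | .imp A B => freeN A ∪ freeN B
  | .allN x A => freeN A \ {x}
  | .exN x A => freeN A \ {x}
  | .allF _ A => freeN A
  | .exF _ A => freeN A

/-- Free function variables of a formula. -/
def freeF : Formula → Set ℕ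
  | .eq s t => tFF s ∪ tFF t
  | .falsum => ∅
  | .and A B => freeF A ∪ freeF B
  | .or A B => freeF A ∪ freeF B
  | .imp A B => freeF A ∪ freeF B
  | .allN _ A => freeF A
  | .exN _ A => freeF A
  | .allF a A => freeF A \ {a}
  | .exF a A => freeF A \ {a}

/-- Substitution A[u/n] of a term u for the number variable n. -/
def subN (n : ℕ) (u : Term) : Formula → Formula
  | .eq s t => .eq (tSubN n u s) (tSubN n u t)
  | .falsum => .falsum
  | .and A B => .and (subN n u A) (subN n u B)
  | .or A B => .or (subN n u A) (subN n u B)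
  | .imp A B => .imp (subN n u A) (subN n u B)
  | .allN x A => if x = n then .allN x A else .allN x (subN n u A)
  | .exN x A => if x = n then .exN x A else .exN x (subN n u A)
  | .allF a A => .allF a (subN n u A)
  | .exF a A => .exF a (subN n u A)

/-- Substitution A[ψ/a] of a functor ψ for the function variable a. -/
def subF (a : ℕ) (ψ : Func) : Formula → Formula
  | .eq s t => .eq (tSubF a ψ s) (tSubF a ψ t)
  | .falsum => .falsum
  | .and A B => .and (subF a ψ A) (subF a ψ B)
  | .or A B => .or (subF a ψ A) (subF a ψ B)
  | .imp A B => .imp (subF a ψ A) (subF a ψ B)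
  | .allN x A => .allN x (subF a ψ A)
  | .exN x A => .exN x (subF a ψ A)
  | .allF b A => if b = a then .allF b A else .allF b (subF a ψ A)
  | .exF b A => if b = a then .exF b A else .exF b (subF a ψ A)

/-- "The term u is free for the number variable n in A". -/
def FreeForN (u : Term) (n : ℕ) : Formula → Prop
  | .eq s t => tFForN u n s ∧ tFForN u n t
  | .falsum => True
  | .and A B => FreeForN u n A ∧ FreeForN u n B
  | .or A B => FreeForN u n A ∧ FreeForN u n B
  | .imp A B => FreeForN u n A ∧ FreeForN u n B
  | .allN m A => m = n ∨ n ∉ freeN A ∨ (m ∉ tFN u ∧ FreeForN u n A)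
  | .exN m A => m = n ∨ n ∉ freeN A ∨ (m ∉ tFN u ∧ FreeForN u n A)
  | .allF b A => n ∉ freeN A ∨ (b ∉ tFF u ∧ FreeForN u n A)
  | .exF b A => n ∉ freeN A ∨ (b ∉ tFF u ∧ FreeForN u n A)

/-- "The functor ψ is free for the function variable a in A". -/
def FreeForF (ψ : Func) (a : ℕ) : Formula → Prop
  | .eq s t => tFForF ψ a s ∧ tFForF ψ a t
  | .falsum => True
  | .and A B => FreeForF ψ a A ∧ FreeForF ψ a B
  | .or A B => FreeForF ψ a A ∧ FreeForF ψ a B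
  | .imp A B => FreeForF ψ a A ∧ FreeForF ψ a B
  | .allN m A => a ∉ freeF A ∨ (m ∉ fFN ψ ∧ FreeForF ψ a A)
  | .exN m A => a ∉ freeF A ∨ (m ∉ fFN ψ ∧ FreeForF ψ a A)
  | .allF b A => b = a ∨ a ∉ freeF A ∨ (b ∉ fFF ψ ∧ FreeForF ψ a A)
  | .exF b A => b = a ∨ a ∉ freeF A ∨ (b ∉ fFF ψ ∧ FreeForF ψ a A)

/-- Derivability from a set of (mathematical) axioms by two-sorted
intuitionistic predicate logic with equality at type 0 as sole prime relation;
a Hilbert-style system with modus ponens and generalization. -/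
inductive Prov (T : Set Formula) : Formula → Prop
  | ax {A : Formula} (h : A ∈ T) : Prov T A
  | k {A B : Formula} : Prov T (A.imp (B.imp A))
  | s {A B C : Formula} : Prov T ((A.imp (B.imp C)).imp ((A.imp B).imp (A.imp C)))
  | andI {A B : Formula} : Prov T (A.imp (B.imp (A.and B)))
  | andE1 {A B : Formula} : Prov T ((A.and B).imp A)
  | andE2 {A B : Formula} : Prov T ((A.and B).imp B)
  | orI1 {A B : Formula} : Prov T (A.imp (A.or B))
  | orI2 {A B : Formula} : Prov T (B.imp (A.or B))
  | orE {A B C : Formula} : Prov T ((A.imp C).imp ((B.imp C).imp ((A.or B).imp C)))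
  | exfalso {A : Formula} : Prov T (Formula.falsum.imp A)
  | mp {A B : Formula} : Prov T (A.imp B) → Prov T A → Prov T B
  | allNE {n : ℕ} {A : Formula} {u : Term} (h : FreeForN u n A) :
      Prov T ((Formula.allN n A).imp (subN n u A))
  | allNI {n : ℕ} {A B : Formula} (h : n ∉ freeN A) :
      Prov T (A.imp B) → Prov T (A.imp (Formula.allN n B))
  | exNI {n : ℕ} {A : Formula} {u : Term} (h : FreeForN u n A) :
      Prov T ((subN n u A).imp (Formula.exN n A))
  | exNE {n : ℕ} {A B : Formula} (h : n ∉ freeN B) :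
      Prov T (A.imp B) → Prov T ((Formula.exN n A).imp B)
  | allFE {a : ℕ} {A : Formula} {ψ : Func} (h : FreeForF ψ a A) :
      Prov T ((Formula.allF a A).imp (subF a ψ A))
  | allFI {a : ℕ} {A B : Formula} (h : a ∉ freeF A) :
      Prov T (A.imp B) → Prov T (A.imp (Formula.allF a B))
  | exFI {a : ℕ} {A : Formula} {ψ : Func} (h : FreeForF ψ a A) :
      Prov T ((subF a ψ A).imp (Formula.exF a A))
  | exFE {a : ℕ} {A B : Formula} (h : a ∉ freeF B) :
      Prov T (A.imp B) → Prov T ((Formula.exF a A).imp B)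
  | genN {n : ℕ} {A : Formula} : Prov T A → Prov T (Formula.allN n A)
  | genF {a : ℕ} {A : Formula} : Prov T A → Prov T (Formula.allF a A)

/-- Two systems (sets of axioms over the same language) have the same theorems. -/
def SameTheory (T₁ T₂ : Set Formula) : Prop := ∀ A, Prov T₁ A ↔ Prov T₂ A

/-- T₁ is a subsystem of T₂: every theorem of T₁ is a theorem of T₂. -/
def Subsystem (T₁ T₂ : Set Formula) : Prop := ∀ A, Prov T₁ A → Prov T₂ A

/-- The Gödel–Gentzen negative translation: hereditarily replace A∨B by
¬(¬A & ¬B) and ∃A by ¬∀¬A (prime formulas, being equations between terms of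
type 0, are their own translations). -/
def gTrans : Formula → Formula
  | .eq s t => .eq s t
  | .falsum => .falsum
  | .and A B => .and (gTrans A) (gTrans B)
  | .or A B => Formula.neg ((Formula.neg (gTrans A)).and (Formula.neg (gTrans B)))
  | .imp A B => .imp (gTrans A) (gTrans B)
  | .allN x A => .allN x (gTrans A)
  | .exN x A => Formula.neg (.allN x (Formula.neg (gTrans A)))
  | .allF a A => .allF a (gTrans A)
  | .exF a A => Formula.neg (.allF a (Formula.neg (gTrans A)))

/-! ### The base system IA₁ -/

/-- Universally valid equations: the defining axioms of the finitely many
primitive recursive constants of the language (all equations true in the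
intended interpretation under every assignment). -/
def validEq : Set Formula :=
  {F | ∃ s t : Term, F = Formula.eq s t ∧ ∀ ρ σ, evalT ρ σ s = evalT ρ σ t}

/-- Leibniz equality schema (includes the open equality axiom
∀x∀y(x=y → α(x)=α(y))). -/
def eqAx : Set Formula :=
  {F | ∃ (n : ℕ) (s t : Term) (A : Formula),
    FreeForN s n A ∧ FreeForN t n A ∧
    F = (Formula.eq s t).imp ((subN n s A).imp (subN n t A))}

/-- Successor axioms. -/
def sucAx : Set Formula :=
  {F | ∃ s t : Term, F = (Formula.eq (Term.succ s) (Term.succ t)).imp (.eq s t)} ∪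
  {F | ∃ t : Term, F = Formula.neg (.eq (Term.succ t) Term.zero)}

/-- Mathematical induction, for all formulas of the two-sorted language. -/
def indAx : Set Formula :=
  {F | ∃ (x : ℕ) (A : Formula),
    F = ((subN x Term.zero A).and
          (Formula.allN x (A.imp (subN x (Term.succ (Term.var x)) A)))).imp
        (Formula.allN x A)}

/-- λ-reduction: (λx.t)(s) = t[s/x], for s free for x in t. -/
def lamAx : Set Formula :=
  {F | ∃ (x : ℕ) (t s : Term), tFForN s x t ∧
    F = Formula.eq (Term.app (Func.lam x t) s) (tSubN x s t)}

/-- IA₁: two-sorted intuitionistic arithmetic. -/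
def IA1 : Set Formula := validEq ∪ eqAx ∪ sucAx ∪ indAx ∪ lamAx

/-- The double negation schema ¬¬A → A of classical logic. -/
def DNE : Set Formula := {F | ∃ A : Formula, F = (Formula.nneg A).imp A}

/-- The Gödel–Gentzen negative translations of all theorems of S + (¬¬A→A). -/
def gThms (S : Set Formula) : Set Formula :=
  {F | ∃ A : Formula, Prov (S ∪ DNE) A ∧ F = gTrans A}

/-- The minimum classical extension S^{+g} of S: the least extension of S
proving the negative translation of every theorem of S + (¬¬A→A). -/
def minClassExt (S : Set Formula) : Set Formula := S ∪ gThms S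

/-! ### Classes of formulas -/

/-- "Quantifier-free" formulas: no function quantifiers and only bounded
number quantifiers. -/
inductive IsQF : Formula → Prop
  | eq (s t : Term) : IsQF (.eq s t)
  | falsum : IsQF .falsum
  | and {A B} : IsQF A → IsQF B → IsQF (A.and B)
  | or {A B} : IsQF A → IsQF B → IsQF (A.or B)
  | imp {A B} : IsQF A → IsQF B → IsQF (A.imp B)
  | ballN {x t A} (h : x ∉ tFN t) (hA : IsQF A) :
      IsQF (.allN x ((tle (Term.var x) t).imp A))
  | bexN {x t A} (h : x ∉ tFN t) (hA : IsQF A) :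
      IsQF (.exN x ((tle (Term.var x) t).and A))

/-- Arithmetical formulas: no function quantifiers (function parameters allowed). -/
def IsArith : Formula → Prop
  | .eq _ _ => True
  | .falsum => True
  | .and A B => IsArith A ∧ IsArith B
  | .or A B => IsArith A ∧ IsArith B
  | .imp A B => IsArith A ∧ IsArith B
  | .allN _ A => IsArith A
  | .exN _ A => IsArith A
  | .allF _ _ => False
  | .exF _ _ => False

/-- Negative formulas: containing neither ∨ nor ∃. -/
def IsNeg : Formula → Prop
  | .eq _ _ => True
  | .falsum => True
  | .and A B => IsNeg A ∧ IsNeg B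
  | .or _ _ => False
  | .imp A B => IsNeg A ∧ IsNeg B
  | .allN _ A => IsNeg A
  | .exN _ _ => False
  | .allF _ A => IsNeg A
  | .exF _ _ => False

/-! ### The axiom schemas -/

/-- An instance of countable choice AC₀₀ : ∀x∃yA(x,y) → ∃α∀xA(x,α(x)). -/
def ac00Inst (x y a : ℕ) (A : Formula) : Formula :=
  (Formula.allN x (.exN y A)).imp
    (.exF a (.allN x (subN y (Term.app (Func.fvar a) (Term.var x)) A)))

def ac00Side (x y a : ℕ) (A : Formula) : Prop :=
  x ≠ y ∧ a ∉ freeF A ∧ FreeForN (Term.app (Func.fvar a) (Term.var x)) y A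

/-- AC₀₀ (full countable choice for numbers). -/
def AC00 : Set Formula :=
  {F | ∃ x y a A, ac00Side x y a A ∧ F = ac00Inst x y a A}

/-- qf-AC₀₀. -/
def qfAC00 : Set Formula :=
  {F | ∃ x y a A, IsQF A ∧ ac00Side x y a A ∧ F = ac00Inst x y a A}

/-- AC^Ar₀₀ (arithmetical countable choice). -/
def arAC00 : Set Formula :=
  {F | ∃ x y a A, IsArith A ∧ ac00Side x y a A ∧ F = ac00Inst x y a A}

/-- ∃!y A, rendered as ∃yA & ∀y∀z(A & A[z/y] → y = z). -/
def exUnique (y z : ℕ) (A : Formula) : Formula :=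
  (Formula.exN y A).and
    (.allN y (.allN z ((A.and (subN y (Term.var z) A)).imp
      (.eq (Term.var y) (Term.var z)))))

/-- AC₀₀! (countable comprehension): ∀x∃!yA(x,y) → ∃α∀xA(x,α(x)). -/
def AC00u : Set Formula :=
  {F | ∃ x y z a A, z ≠ y ∧ z ∉ freeN A ∧ FreeForN (Term.var z) y A ∧
    ac00Side x y a A ∧
    F = (Formula.allN x (exUnique y z A)).imp
          (.exF a (.allN x (subN y (Term.app (Func.fvar a) (Term.var x)) A)))}

/-- AC₀₁ : ∀x∃αA(x,α) → ∃β∀xA(x,λy.β(⟨x,y⟩)). -/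
def AC01 : Set Formula :=
  {F | ∃ (x a b y : ℕ) (A : Formula), b ∉ freeF A ∧ b ≠ a ∧ y ≠ x ∧
    FreeForF (Func.lam y (Term.app (Func.fvar b)
      (Term.pair (Term.var x) (Term.var y)))) a A ∧
    F = (Formula.allN x (.exF a A)).imp
          (.exF b (.allN x (subF a (Func.lam y (Term.app (Func.fvar b)
            (Term.pair (Term.var x) (Term.var y)))) A)))}

/-- CF_d : ∀x(A(x) ∨ ¬A(x)) → ∃α∀x[α(x)≤1 & (α(x)=0 ↔ A(x))]. -/
def CFd : Set Formula :=
  {F | ∃ (x a : ℕ) (A : Formula), a ∉ freeF A ∧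
    F = (Formula.allN x (A.or (Formula.neg A))).imp
          (.exF a (.allN x ((tle (Term.app (Func.fvar a) (Term.var x))
              (Term.succ Term.zero)).and
            (Formula.iff (.eq (Term.app (Func.fvar a) (Term.var x)) Term.zero) A))))}

/-- WCF₀⁻ : ¬¬∃ζ∀x(ζ(x)=0 ↔ A(x)) for negative A. -/
def WCF0neg : Set Formula :=
  {F | ∃ (x z : ℕ) (A : Formula), IsNeg A ∧ z ∉ freeF A ∧
    F = Formula.nneg (.exF z (.allN x
      (Formula.iff (.eq (Term.app (Func.fvar z) (Term.var x)) Term.zero) A)))}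

/-- Markov's Principle MP₁ : ∀α(¬∀x¬α(x)=0 → ∃x α(x)=0). -/
def MP1 : Formula :=
  .allF 0 ((Formula.neg (.allN 0 (Formula.neg
      (.eq (Term.app (Func.fvar 0) (Term.var 0)) Term.zero)))).imp
    (.exN 0 (.eq (Term.app (Func.fvar 0) (Term.var 0)) Term.zero)))

/-- Σ⁰₁-DNS₀ : ∀α[∀x¬¬∃y α(⟨x,y⟩)=0 → ¬¬∀x∃y α(⟨x,y⟩)=0]. -/
def Sigma01DNS0 : Formula :=
  .allF 0 ((Formula.allN 0 (Formula.nneg (.exN 1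
      (.eq (Term.app (Func.fvar 0) (Term.pair (Term.var 0) (Term.var 1))) Term.zero)))).imp
    (Formula.nneg (.allN 0 (.exN 1
      (.eq (Term.app (Func.fvar 0) (Term.pair (Term.var 0) (Term.var 1))) Term.zero)))))

/-- DNS₁ : ∀ρ[∀α¬¬∃x ρ(ᾱ(x))=0 → ¬¬∀α∃x ρ(ᾱ(x))=0]. -/
def DNS1 : Formula :=
  .allF 0 ((Formula.allF 1 (Formula.nneg (.exN 0
      (.eq (Term.app (Func.fvar 0) (Term.bar (Func.fvar 1) (Term.var 0))) Term.zero)))).imp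
    (Formula.nneg (.allF 1 (.exN 0
      (.eq (Term.app (Func.fvar 0) (Term.bar (Func.fvar 1) (Term.var 0))) Term.zero)))))

/-- B(α) : α is a binary sequence, ∀x α(x) ≤ 1. -/
def binF (a x : ℕ) : Formula :=
  .allN x (tle (Term.app (Func.fvar a) (Term.var x)) (Term.succ Term.zero))

/-- GDK : ∀ρ[∀α_{B(α)}¬¬∃x ρ(ᾱ(x))=0 → ¬¬∀α_{B(α)}∃x ρ(ᾱ(x))=0]. -/
def GDK : Formula :=
  .allF 0 ((Formula.allF 1 ((binF 1 1).imp (Formula.nneg (.exN 0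
      (.eq (Term.app (Func.fvar 0) (Term.bar (Func.fvar 1) (Term.var 0))) Term.zero))))).imp
    (Formula.nneg (.allF 1 ((binF 1 1).imp (.exN 0
      (.eq (Term.app (Func.fvar 0) (Term.bar (Func.fvar 1) (Term.var 0))) Term.zero))))))

/-- FT₁ (the fan theorem):
∀ρ[∀α_{B(α)}∃x ρ(ᾱ(x))=0 → ∃n∀α_{B(α)}∃x≤n ρ(ᾱ(x))=0]. -/
def FT1 : Formula :=
  .allF 0 ((Formula.allF 1 ((binF 1 1).imp (.exN 0
      (.eq (Term.app (Func.fvar 0) (Term.bar (Func.fvar 1) (Term.var 0))) Term.zero)))).imp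
    (.exN 2 (.allF 1 ((binF 1 1).imp (.exN 0 ((tle (Term.var 0) (Term.var 2)).and
      (.eq (Term.app (Func.fvar 0) (Term.bar (Func.fvar 1) (Term.var 0))) Term.zero)))))))

/-- An instance of bar induction BI₁ with bar ρ (function variable r) and
inductive predicate A(w). -/
def biInst (r aa xv w s : ℕ) (A : Formula) : Formula :=
  ((Formula.allF aa (.exN xv (.eq
      (Term.app (Func.fvar r) (Term.bar (Func.fvar aa) (Term.var xv))) Term.zero))).and
    ((Formula.allN w (((seqF (Term.var w)).and
        (.eq (Term.app (Func.fvar r) (Term.var w)) Term.zero)).imp A)).and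
      (Formula.allN w (((seqF (Term.var w)).and
        (.allN s (subN w (Term.cat (Term.var w)
          (Term.sing (Term.succ (Term.var s)))) A))).imp A)))).imp
  (subN w Term.empt A)

/-- BI₁ (bar induction, Kleene's ˣ26.3b). -/
def BI1 : Set Formula :=
  {F | ∃ r aa xv w s A, aa ≠ r ∧ aa ∉ freeF A ∧ s ≠ w ∧ s ∉ freeN A ∧
    FreeForN (Term.cat (Term.var w) (Term.sing (Term.succ (Term.var s)))) w A ∧
    F = biInst r aa xv w s A}

/-- Π⁰₁-WCF₀ : ∀α¬¬∃ζ∀x(ζ(x)=0 ↔ ∀y α(⟨x,y⟩)=0). -/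
def Pi01WCF0 : Formula :=
  .allF 0 (Formula.nneg (.exF 1 (.allN 0
    (Formula.iff (.eq (Term.app (Func.fvar 1) (Term.var 0)) Term.zero)
      (.allN 1 (.eq (Term.app (Func.fvar 0)
        (Term.pair (Term.var 0) (Term.var 1))) Term.zero))))))

/-- Π¹₁-WCF₀ : ∀γ¬¬∃ζ∀x(ζ(x)=0 ↔ ∀α∃y γ(ᾱ(⟨x,y⟩))=0). -/
def Pi11WCF0 : Formula :=
  .allF 0 (Formula.nneg (.exF 1 (.allN 0
    (Formula.iff (.eq (Term.app (Func.fvar 1) (Term.var 0)) Term.zero)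
      (.allF 2 (.exN 1 (.eq (Term.app (Func.fvar 0)
        (Term.bar (Func.fvar 2) (Term.pair (Term.var 0) (Term.var 1)))) Term.zero)))))))

/-- T(e,x,y) as a formula. -/
def TFml (e x y : Term) : Formula := .eq (Term.kT e x y) Term.zero

/-- GR(φ): "φ is general recursive",
∃e[∀x∃yT(e,x,y) & ∀x∀y(T(e,x,y) → U(y)=φ(x))]. -/
def GRof (φ : Func) : Formula :=
  .exN 0 ((Formula.allN 1 (.exN 2 (TFml (Term.var 0) (Term.var 1) (Term.var 2)))).and
    (.allN 1 (.allN 2 ((TFml (Term.var 0) (Term.var 1) (Term.var 2)).imp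
      (.eq (Term.kU (Term.var 2)) (Term.app φ (Term.var 1)))))))

/-- Church's Thesis CT₁ : ∀α GR(α). -/
def CT1 : Formula := .allF 0 (GRof (Func.fvar 0))

/-- ∀α¬¬GR(α). -/
def nnGR : Formula := .allF 0 (Formula.nneg (GRof (Func.fvar 0)))

/-- {τ}[α](x) = y in Kleene's sense: τ(⟨x⟩∗ᾱ(y)) > 0 with minimal y,
used to state continuous choice. -/
def ccApp (t a x y : ℕ) : Formula :=
  .eq (Term.app (Func.fvar t)
    (Term.cat (Term.sing (Term.var x)) (Term.bar (Func.fvar a) (Term.var y)))) Term.zero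

/-- An instance of Kleene's strong continuous choice CC₁₁ (Brouwer's principle
for functions, ˣ27.1): ∀α∃βA(α,β) → ∃τ∀α[{τ}[α] is completely defined &
∀β({τ}[α] = β → A(α,β))]. -/
def cc11Inst (a b t x y z : ℕ) (A : Formula) : Formula :=
  (Formula.allF a (.exF b A)).imp
    (.exF t (.allF a
      ((Formula.allN x (.exN y (Formula.neg (ccApp t a x y)))).and
        (.allF b ((Formula.allN x (.exN y
          ((Formula.eq (Term.app (Func.fvar t) (Term.cat (Term.sing (Term.var x))
              (Term.bar (Func.fvar a) (Term.var y))))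
            (Term.succ (Term.app (Func.fvar b) (Term.var x)))).and
           (.allN z ((tlt (Term.var z) (Term.var y)).imp (ccApp t a x z)))))).imp A)))))

/-- CC₁₁ as a schema. -/
def CC11 : Set Formula :=
  {F | ∃ a b t x y z A, t ∉ freeF A ∧ t ≠ a ∧ t ≠ b ∧ a ≠ b ∧
    x ∉ freeN A ∧ y ∉ freeN A ∧ z ∉ freeN A ∧
    x ≠ y ∧ y ≠ z ∧ x ≠ z ∧
    F = cc11Inst a b t x y z A}

/-! ### The systems -/

/-- Intuitionistic recursive analysis IRA = IA₁ + qf-AC₀₀. -/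
def IRA : Set Formula := IA1 ∪ qfAC00

/-- Kleene's basic system B = IA₁ + AC₀₁ + BI₁. -/
def Bsys : Set Formula := IA1 ∪ AC01 ∪ BI1

/-- Markov's recursive analysis MRA = IRA + CT₁ + MP₁. -/
def MRA : Set Formula := IRA ∪ {CT1, MP1}

/-- The subsystems of B considered in Theorem 5.1. -/
def theoremSystems : List (Set Formula) :=
  [IA1, IRA, IA1 ∪ arAC00, IA1 ∪ AC00u, IA1 ∪ AC00, IA1 ∪ AC01,
   IA1 ∪ {FT1}, IRA ∪ {FT1}, IRA ∪ BI1, IA1 ∪ AC00 ∪ BI1, Bsys]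

end NegInterp


namespace NegInterp

/-! ### Auxiliary development for statement6 -/

open Formula

/-- Iterated implication from a list of hypotheses. -/
def ctxImp : List Formula → Formula → Formula
  | [], A => A
  | B :: Γ, A => B.imp (ctxImp Γ A)

theorem ctxImp_append (Γ : List Formula) (A B : Formula) :
    ctxImp (Γ ++ [A]) B = ctxImp Γ (A.imp B) := by
  induction Γ with
  | nil => rfl
  | cons C Δ ih => simp [ctxImp, ih]

/-- Provability under a list of hypotheses. -/
def PC (T : Set Formula) (Γ : List Formula) (A : Formula) : Prop := Prov T (ctxImp Γ A)

theorem Prov.imp_refl {T : Set Formula} {A : Formula} : Prov T (A.imp A) :=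
  Prov.mp (Prov.mp (Prov.s (A := A) (B := A.imp A) (C := A)) Prov.k) Prov.k

theorem Prov.imp_trans {T : Set Formula} {A B C : Formula}
    (h1 : Prov T (A.imp B)) (h2 : Prov T (B.imp C)) : Prov T (A.imp C) :=
  Prov.mp (Prov.mp Prov.s (Prov.mp Prov.k h2)) h1

theorem Prov.b_under {T : Set Formula} {A B C : Formula}
    (h : Prov T (B.imp C)) : Prov T ((A.imp B).imp (A.imp C)) :=
  Prov.mp Prov.s (Prov.mp Prov.k h)

theorem Prov.s2 {T : Set Formula} {A P Q R : Formula}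
    (h : Prov T (P.imp (Q.imp R))) :
    Prov T ((A.imp P).imp ((A.imp Q).imp (A.imp R))) :=
  Prov.imp_trans (Prov.b_under h) Prov.s

/-- S distributed over a context. -/
theorem ctx_s {T : Set Formula} (Γ : List Formula) (A B : Formula) :
    Prov T ((ctxImp Γ (A.imp B)).imp ((ctxImp Γ A).imp (ctxImp Γ B))) := by
  induction Γ with
  | nil => exact Prov.imp_refl
  | cons C Δ ih => exact Prov.s2 ih

namespace PC

variable {T : Set Formula} {Γ Δ : List Formula} {A B C D : Formula}

theorem ofProv (h : Prov T A) : PC T Γ A := by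
  induction Γ with
  | nil => exact h
  | cons C Δ ih => exact Prov.mp Prov.k ih

theorem toProv (h : PC T [] A) : Prov T A := h

theorem mp (h1 : PC T Γ (A.imp B)) (h2 : PC T Γ A) : PC T Γ B :=
  Prov.mp (Prov.mp (ctx_s Γ A B) h1) h2

theorem ax (h : A ∈ T) : PC T Γ A := ofProv (Prov.ax h)

/-- A → Γ → A. -/
theorem ctx_self (Γ : List Formula) (A : Formula) : Prov T (A.imp (ctxImp Γ A)) := by
  induction Γ with
  | nil => exact Prov.imp_refl
  | cons C Δ ih => exact Prov.imp_trans ih Prov.k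

theorem hyp (h : A ∈ Γ) : PC T Γ A := by
  induction Γ with
  | nil => simp at h
  | cons C Δ ih =>
    rcases List.mem_cons.1 h with h | h
    · subst h; exact ctx_self Δ A
    · exact Prov.mp Prov.k (ih h)

theorem intro (h : PC T (Γ ++ [A]) B) : PC T Γ (A.imp B) := by
  rwa [PC, ctxImp_append] at h

theorem elim (h : PC T Γ (A.imp B)) : PC T (Γ ++ [A]) B := by
  rwa [PC, ctxImp_append]

theorem weak1 (h : PC T Γ A) : PC T (Γ ++ [B]) A :=
  elim (mp (ofProv Prov.k) h)

theorem weak (h : PC T Γ A) : ∀ Δ, PC T (Γ ++ Δ) A := by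
  intro Δ
  induction Δ using List.reverseRecOn with
  | nil => simpa using h
  | append_singleton Δ C ih => rw [← List.append_assoc]; exact weak1 ih

theorem andI (h1 : PC T Γ A) (h2 : PC T Γ B) : PC T Γ (A.and B) :=
  mp (mp (ofProv Prov.andI) h1) h2

theorem andE1 (h : PC T Γ (A.and B)) : PC T Γ A := mp (ofProv Prov.andE1) h
theorem andE2 (h : PC T Γ (A.and B)) : PC T Γ B := mp (ofProv Prov.andE2) h
theorem orI1 (h : PC T Γ A) : PC T Γ (A.or B) := mp (ofProv Prov.orI1) h
theorem orI2 (h : PC T Γ B) : PC T Γ (A.or B) := mp (ofProv Prov.orI2) h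

theorem orE (h : PC T Γ (A.or B)) (h1 : PC T (Γ ++ [A]) C) (h2 : PC T (Γ ++ [B]) C) :
    PC T Γ C :=
  mp (mp (mp (ofProv Prov.orE) (intro h1)) (intro h2)) h

theorem exfalso (h : PC T Γ Formula.falsum) : PC T Γ A := mp (ofProv Prov.exfalso) h

theorem negE (h1 : PC T Γ (Formula.neg A)) (h2 : PC T Γ A) : PC T Γ Formula.falsum :=
  mp h1 h2

theorem negI (h : PC T (Γ ++ [A]) Formula.falsum) : PC T Γ (Formula.neg A) := intro h

theorem nnI (h : PC T Γ A) : PC T Γ (Formula.nneg A) :=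
  negI (negE (hyp (by simp)) (weak1 h))

/-- ¬¬¬A → ¬A. -/
theorem nneg_neg (h : PC T Γ (Formula.nneg (Formula.neg A))) : PC T Γ (Formula.neg A) :=
  negI (negE (weak1 h) (nnI (hyp (by simp))))

/-- ¬¬ is monotone: from ⊢ A→B and ¬¬A conclude ¬¬B. -/
theorem nn_map (h : Prov T (A.imp B)) (h2 : PC T Γ (Formula.nneg A)) :
    PC T Γ (Formula.nneg B) :=
  negI (negE (weak1 h2)
    (negI (negE (hyp (A := Formula.neg B) (by simp))
      (mp (ofProv h) (hyp (by simp))))))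

end PC


/-! ### Syntactic lemmas on terms and functors -/

mutual
theorem tSubN_self (n : ℕ) : ∀ t : Term, tSubN n (Term.var n) t = t
  | .var m => by by_cases h : m = n <;> simp [tSubN, h]
  | .zero => rfl
  | .empt => rfl
  | .succ t => by simp [tSubN, tSubN_self n t]
  | .sing t => by simp [tSubN, tSubN_self n t]
  | .lh t => by simp [tSubN, tSubN_self n t]
  | .seqc t => by simp [tSubN, tSubN_self n t]
  | .kU t => by simp [tSubN, tSubN_self n t]
  | .add s t => by simp [tSubN, tSubN_self n s, tSubN_self n t]
  | .mul s t => by simp [tSubN, tSubN_self n s, tSubN_self n t]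
  | .sub s t => by simp [tSubN, tSubN_self n s, tSubN_self n t]
  | .pair s t => by simp [tSubN, tSubN_self n s, tSubN_self n t]
  | .cat s t => by simp [tSubN, tSubN_self n s, tSubN_self n t]
  | .kT e x y => by simp [tSubN, tSubN_self n e, tSubN_self n x, tSubN_self n y]
  | .app φ t => by simp [tSubN, tSubN_self n t, fSubN_self n φ]
  | .bar φ t => by simp [tSubN, tSubN_self n t, fSubN_self n φ]
theorem fSubN_self (n : ℕ) : ∀ φ : Func, fSubN n (Term.var n) φ = φ
  | .fvar a => rfl
  | .lam x t => by by_cases h : x = n <;> simp [fSubN, h, tSubN_self n t]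
end

mutual
theorem tSubN_of_not_free (n : ℕ) (u : Term) : ∀ t : Term, n ∉ tFN t → tSubN n u t = t
  | .var m => by intro h; simp [tFN] at h; simp [tSubN, Ne.symm h]
  | .zero => by intro _; rfl
  | .empt => by intro _; rfl
  | .succ t => by intro h; simp [tFN] at h; simp [tSubN, tSubN_of_not_free n u t h]
  | .sing t => by intro h; simp [tFN] at h; simp [tSubN, tSubN_of_not_free n u t h]
  | .lh t => by intro h; simp [tFN] at h; simp [tSubN, tSubN_of_not_free n u t h]
  | .seqc t => by intro h; simp [tFN] at h; simp [tSubN, tSubN_of_not_free n u t h]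
  | .kU t => by intro h; simp [tFN] at h; simp [tSubN, tSubN_of_not_free n u t h]
  | .add s t => by
      intro h; simp [tFN] at h
      simp [tSubN, tSubN_of_not_free n u s h.1, tSubN_of_not_free n u t h.2]
  | .mul s t => by
      intro h; simp [tFN] at h
      simp [tSubN, tSubN_of_not_free n u s h.1, tSubN_of_not_free n u t h.2]
  | .sub s t => by
      intro h; simp [tFN] at h
      simp [tSubN, tSubN_of_not_free n u s h.1, tSubN_of_not_free n u t h.2]
  | .pair s t => by
      intro h; simp [tFN] at h
      simp [tSubN, tSubN_of_not_free n u s h.1, tSubN_of_not_free n u t h.2]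
  | .cat s t => by
      intro h; simp [tFN] at h
      simp [tSubN, tSubN_of_not_free n u s h.1, tSubN_of_not_free n u t h.2]
  | .kT e x y => by
      intro h; simp [tFN] at h
      simp [tSubN, tSubN_of_not_free n u e h.1.1, tSubN_of_not_free n u x h.1.2,
        tSubN_of_not_free n u y h.2]
  | .app φ t => by
      intro h; simp [tFN] at h
      simp [tSubN, fSubN_of_not_free n u φ h.1, tSubN_of_not_free n u t h.2]
  | .bar φ t => by
      intro h; simp [tFN] at h
      simp [tSubN, fSubN_of_not_free n u φ h.1, tSubN_of_not_free n u t h.2]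
theorem fSubN_of_not_free (n : ℕ) (u : Term) : ∀ φ : Func, n ∉ fFN φ → fSubN n u φ = φ
  | .fvar a => by intro _; rfl
  | .lam x t => by
      intro h
      by_cases hx : x = n
      · simp [fSubN, hx]
      · simp [fFN, Set.mem_diff] at h
        simp [fSubN, hx, tSubN_of_not_free n u t (fun hn => by simp [hn, Ne.symm hx] at h)]
end

mutual
theorem tFForN_var_self (n : ℕ) : ∀ t : Term, tFForN (Term.var n) n t
  | .var _ => trivial
  | .zero => trivial
  | .empt => trivial
  | .succ t => tFForN_var_self n t
  | .sing t => tFForN_var_self n t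
  | .lh t => tFForN_var_self n t
  | .seqc t => tFForN_var_self n t
  | .kU t => tFForN_var_self n t
  | .add s t => ⟨tFForN_var_self n s, tFForN_var_self n t⟩
  | .mul s t => ⟨tFForN_var_self n s, tFForN_var_self n t⟩
  | .sub s t => ⟨tFForN_var_self n s, tFForN_var_self n t⟩
  | .pair s t => ⟨tFForN_var_self n s, tFForN_var_self n t⟩
  | .cat s t => ⟨tFForN_var_self n s, tFForN_var_self n t⟩
  | .kT e x y => ⟨tFForN_var_self n e, tFForN_var_self n x, tFForN_var_self n y⟩
  | .app φ t => ⟨fFForN_var_self n φ, tFForN_var_self n t⟩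
  | .bar φ t => ⟨fFForN_var_self n φ, tFForN_var_self n t⟩
theorem fFForN_var_self (n : ℕ) : ∀ φ : Func, fFForN (Term.var n) n φ
  | .fvar _ => trivial
  | .lam x t => by
      by_cases hx : x = n
      · exact Or.inl hx
      · exact Or.inr (Or.inr ⟨by simp [tFN, hx], tFForN_var_self n t⟩)
end

mutual
theorem tFForN_of_not_free (u : Term) (n : ℕ) : ∀ t : Term, n ∉ tFN t → tFForN u n t
  | .var _ => fun _ => trivial
  | .zero => fun _ => trivial
  | .empt => fun _ => trivial
  | .succ t => fun h => tFForN_of_not_free u n t (by simpa [tFN] using h)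
  | .sing t => fun h => tFForN_of_not_free u n t (by simpa [tFN] using h)
  | .lh t => fun h => tFForN_of_not_free u n t (by simpa [tFN] using h)
  | .seqc t => fun h => tFForN_of_not_free u n t (by simpa [tFN] using h)
  | .kU t => fun h => tFForN_of_not_free u n t (by simpa [tFN] using h)
  | .add s t => fun h => by
      simp [tFN] at h; exact ⟨tFForN_of_not_free u n s h.1, tFForN_of_not_free u n t h.2⟩
  | .mul s t => fun h => by
      simp [tFN] at h; exact ⟨tFForN_of_not_free u n s h.1, tFForN_of_not_free u n t h.2⟩
  | .sub s t => fun h => by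
      simp [tFN] at h; exact ⟨tFForN_of_not_free u n s h.1, tFForN_of_not_free u n t h.2⟩
  | .pair s t => fun h => by
      simp [tFN] at h; exact ⟨tFForN_of_not_free u n s h.1, tFForN_of_not_free u n t h.2⟩
  | .cat s t => fun h => by
      simp [tFN] at h; exact ⟨tFForN_of_not_free u n s h.1, tFForN_of_not_free u n t h.2⟩
  | .kT e x y => fun h => by
      simp [tFN] at h
      exact ⟨tFForN_of_not_free u n e h.1.1, tFForN_of_not_free u n x h.1.2,
        tFForN_of_not_free u n y h.2⟩
  | .app φ t => fun h => by
      simp [tFN] at h; exact ⟨fFForN_of_not_free u n φ h.1, tFForN_of_not_free u n t h.2⟩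
  | .bar φ t => fun h => by
      simp [tFN] at h; exact ⟨fFForN_of_not_free u n φ h.1, tFForN_of_not_free u n t h.2⟩
theorem fFForN_of_not_free (u : Term) (n : ℕ) : ∀ φ : Func, n ∉ fFN φ → fFForN u n φ
  | .fvar _ => fun _ => trivial
  | .lam x t => fun h => by
      by_cases hx : x = n
      · exact Or.inl hx
      · simp [fFN, Set.mem_diff] at h
        exact Or.inr (Or.inl (fun hn => by simp [hn, Ne.symm hx] at h))
end

mutual
theorem tSubF_self (a : ℕ) : ∀ t : Term, tSubF a (Func.fvar a) t = t
  | .var _ => rfl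
  | .zero => rfl
  | .empt => rfl
  | .succ t => by simp [tSubF, tSubF_self a t]
  | .sing t => by simp [tSubF, tSubF_self a t]
  | .lh t => by simp [tSubF, tSubF_self a t]
  | .seqc t => by simp [tSubF, tSubF_self a t]
  | .kU t => by simp [tSubF, tSubF_self a t]
  | .add s t => by simp [tSubF, tSubF_self a s, tSubF_self a t]
  | .mul s t => by simp [tSubF, tSubF_self a s, tSubF_self a t]
  | .sub s t => by simp [tSubF, tSubF_self a s, tSubF_self a t]
  | .pair s t => by simp [tSubF, tSubF_self a s, tSubF_self a t]
  | .cat s t => by simp [tSubF, tSubF_self a s, tSubF_self a t]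
  | .kT e x y => by simp [tSubF, tSubF_self a e, tSubF_self a x, tSubF_self a y]
  | .app φ t => by simp [tSubF, tSubF_self a t, fSubF_self a φ]
  | .bar φ t => by simp [tSubF, tSubF_self a t, fSubF_self a φ]
theorem fSubF_self (a : ℕ) : ∀ φ : Func, fSubF a (Func.fvar a) φ = φ
  | .fvar b => by by_cases h : b = a <;> simp [fSubF, h]
  | .lam x t => by simp [fSubF, tSubF_self a t]
end

mutual
theorem tFForF_fvar_self (a : ℕ) : ∀ t : Term, tFForF (Func.fvar a) a t
  | .var _ => trivial
  | .zero => trivial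
  | .empt => trivial
  | .succ t => tFForF_fvar_self a t
  | .sing t => tFForF_fvar_self a t
  | .lh t => tFForF_fvar_self a t
  | .seqc t => tFForF_fvar_self a t
  | .kU t => tFForF_fvar_self a t
  | .add s t => ⟨tFForF_fvar_self a s, tFForF_fvar_self a t⟩
  | .mul s t => ⟨tFForF_fvar_self a s, tFForF_fvar_self a t⟩
  | .sub s t => ⟨tFForF_fvar_self a s, tFForF_fvar_self a t⟩
  | .pair s t => ⟨tFForF_fvar_self a s, tFForF_fvar_self a t⟩
  | .cat s t => ⟨tFForF_fvar_self a s, tFForF_fvar_self a t⟩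
  | .kT e x y => ⟨tFForF_fvar_self a e, tFForF_fvar_self a x, tFForF_fvar_self a y⟩
  | .app φ t => ⟨fFForF_fvar_self a φ, tFForF_fvar_self a t⟩
  | .bar φ t => ⟨fFForF_fvar_self a φ, tFForF_fvar_self a t⟩
theorem fFForF_fvar_self (a : ℕ) : ∀ φ : Func, fFForF (Func.fvar a) a φ
  | .fvar _ => trivial
  | .lam x t => Or.inr ⟨by simp [fFN], tFForF_fvar_self a t⟩
end

mutual
theorem tFN_finite : ∀ t : Term, (tFN t).Finite
  | .var n => by simp [tFN]
  | .zero => by simp [tFN]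
  | .empt => by simp [tFN]
  | .succ t => by simpa [tFN] using tFN_finite t
  | .sing t => by simpa [tFN] using tFN_finite t
  | .lh t => by simpa [tFN] using tFN_finite t
  | .seqc t => by simpa [tFN] using tFN_finite t
  | .kU t => by simpa [tFN] using tFN_finite t
  | .add s t => by simpa [tFN] using (tFN_finite s).union (tFN_finite t)
  | .mul s t => by simpa [tFN] using (tFN_finite s).union (tFN_finite t)
  | .sub s t => by simpa [tFN] using (tFN_finite s).union (tFN_finite t)
  | .pair s t => by simpa [tFN] using (tFN_finite s).union (tFN_finite t)
  | .cat s t => by simpa [tFN] using (tFN_finite s).union (tFN_finite t)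
  | .kT e x y => by
      simpa [tFN] using ((tFN_finite e).union (tFN_finite x)).union (tFN_finite y)
  | .app φ t => by simpa [tFN] using (fFN_finite φ).union (tFN_finite t)
  | .bar φ t => by simpa [tFN] using (fFN_finite φ).union (tFN_finite t)
theorem fFN_finite : ∀ φ : Func, (fFN φ).Finite
  | .fvar _ => by simp [fFN]
  | .lam x t => by simpa [fFN] using ((tFN_finite t).subset Set.diff_subset : (tFN t \ {x}).Finite)
end

theorem exists_fresh (s t : Term) : ∃ n : ℕ, n ∉ tFN s ∧ n ∉ tFN t := by
  obtain ⟨n, hn⟩ := (((tFN_finite s).union (tFN_finite t)).infinite_compl).nonempty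
  exact ⟨n, by simpa [Set.mem_compl_iff] using hn⟩

/-! ### Formula-level substitution lemmas -/

theorem subN_self (n : ℕ) : ∀ A : Formula, subN n (Term.var n) A = A
  | .eq s t => by simp [subN, tSubN_self]
  | .falsum => rfl
  | .and A B => by simp [subN, subN_self n A, subN_self n B]
  | .or A B => by simp [subN, subN_self n A, subN_self n B]
  | .imp A B => by simp [subN, subN_self n A, subN_self n B]
  | .allN x A => by by_cases h : x = n <;> simp [subN, h, subN_self n A]
  | .exN x A => by by_cases h : x = n <;> simp [subN, h, subN_self n A]
  | .allF b A => by simp [subN, subN_self n A]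
  | .exF b A => by simp [subN, subN_self n A]

theorem FreeForN_var_self (n : ℕ) : ∀ A : Formula, FreeForN (Term.var n) n A
  | .eq s t => ⟨tFForN_var_self n s, tFForN_var_self n t⟩
  | .falsum => trivial
  | .and A B => ⟨FreeForN_var_self n A, FreeForN_var_self n B⟩
  | .or A B => ⟨FreeForN_var_self n A, FreeForN_var_self n B⟩
  | .imp A B => ⟨FreeForN_var_self n A, FreeForN_var_self n B⟩
  | .allN m A => by
      by_cases h : m = n
      · exact Or.inl h
      · exact Or.inr (Or.inr ⟨by simp [tFN, h], FreeForN_var_self n A⟩)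
  | .exN m A => by
      by_cases h : m = n
      · exact Or.inl h
      · exact Or.inr (Or.inr ⟨by simp [tFN, h], FreeForN_var_self n A⟩)
  | .allF b A => Or.inr ⟨by simp [tFF], FreeForN_var_self n A⟩
  | .exF b A => Or.inr ⟨by simp [tFF], FreeForN_var_self n A⟩

theorem subF_self (a : ℕ) : ∀ A : Formula, subF a (Func.fvar a) A = A
  | .eq s t => by simp [subF, tSubF_self]
  | .falsum => rfl
  | .and A B => by simp [subF, subF_self a A, subF_self a B]
  | .or A B => by simp [subF, subF_self a A, subF_self a B]
  | .imp A B => by simp [subF, subF_self a A, subF_self a B]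
  | .allN x A => by simp [subF, subF_self a A]
  | .exN x A => by simp [subF, subF_self a A]
  | .allF b A => by by_cases h : b = a <;> simp [subF, h, subF_self a A]
  | .exF b A => by by_cases h : b = a <;> simp [subF, h, subF_self a A]

theorem FreeForF_fvar_self (a : ℕ) : ∀ A : Formula, FreeForF (Func.fvar a) a A
  | .eq s t => ⟨tFForF_fvar_self a s, tFForF_fvar_self a t⟩
  | .falsum => trivial
  | .and A B => ⟨FreeForF_fvar_self a A, FreeForF_fvar_self a B⟩
  | .or A B => ⟨FreeForF_fvar_self a A, FreeForF_fvar_self a B⟩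
  | .imp A B => ⟨FreeForF_fvar_self a A, FreeForF_fvar_self a B⟩
  | .allN m A => Or.inr ⟨by simp [fFN], FreeForF_fvar_self a A⟩
  | .exN m A => Or.inr ⟨by simp [fFN], FreeForF_fvar_self a A⟩
  | .allF b A => by
      by_cases h : b = a
      · exact Or.inl h
      · exact Or.inr (Or.inr ⟨by simp [fFF, h], FreeForF_fvar_self a A⟩)
  | .exF b A => by
      by_cases h : b = a
      · exact Or.inl h
      · exact Or.inr (Or.inr ⟨by simp [fFF, h], FreeForF_fvar_self a A⟩)

/-! ### Quantifier machinery -/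

theorem Prov.allNE_self {T : Set Formula} {n : ℕ} {A : Formula} :
    Prov T ((Formula.allN n A).imp A) := by
  have := Prov.allNE (T := T) (u := Term.var n) (FreeForN_var_self n A)
  rwa [subN_self] at this

theorem Prov.allFE_self {T : Set Formula} {a : ℕ} {A : Formula} :
    Prov T ((Formula.allF a A).imp A) := by
  have := Prov.allFE (T := T) (ψ := Func.fvar a) (FreeForF_fvar_self a A)
  rwa [subF_self] at this

theorem Prov.exNI_self {T : Set Formula} {n : ℕ} {A : Formula} :
    Prov T (A.imp (Formula.exN n A)) := by
  have := Prov.exNI (T := T) (u := Term.var n) (FreeForN_var_self n A)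
  rwa [subN_self] at this

theorem Prov.exFI_self {T : Set Formula} {a : ℕ} {A : Formula} :
    Prov T (A.imp (Formula.exF a A)) := by
  have := Prov.exFI (T := T) (ψ := Func.fvar a) (FreeForF_fvar_self a A)
  rwa [subF_self] at this

theorem d1_N {T : Set Formula} {n : ℕ} {C X : Formula} (h : n ∉ freeN C) :
    Prov T ((Formula.allN n (C.imp X)).imp (C.imp (Formula.allN n X))) := by
  set W : Formula := Formula.allN n (C.imp X) with hW
  have step2 : Prov T ((W.and C).imp X) := by
    have h1 : PC T [W.and C] (W.and C) := PC.hyp (by simp)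
    have h4 : PC T [W.and C] (C.imp X) :=
      PC.mp (PC.ofProv (Prov.allNE_self (n := n) (A := C.imp X))) (PC.andE1 h1)
    exact PC.mp h4 (PC.andE2 h1)
  have step3 : Prov T ((W.and C).imp (Formula.allN n X)) := by
    refine Prov.allNI ?_ step2
    simp [freeN, hW, h]
  have h1 : PC T [W, C] W := PC.hyp (by simp)
  have h2 : PC T [W, C] C := PC.hyp (by simp)
  have : PC T [W, C] (Formula.allN n X) := PC.mp (PC.ofProv step3) (PC.andI h1 h2)
  exact this

theorem d1_F {T : Set Formula} {a : ℕ} {C X : Formula} (h : a ∉ freeF C) :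
    Prov T ((Formula.allF a (C.imp X)).imp (C.imp (Formula.allF a X))) := by
  set W : Formula := Formula.allF a (C.imp X) with hW
  have step2 : Prov T ((W.and C).imp X) := by
    have h1 : PC T [W.and C] (W.and C) := PC.hyp (by simp)
    have h4 : PC T [W.and C] (C.imp X) :=
      PC.mp (PC.ofProv (Prov.allFE_self (a := a) (A := C.imp X))) (PC.andE1 h1)
    exact PC.mp h4 (PC.andE2 h1)
  have step3 : Prov T ((W.and C).imp (Formula.allF a X)) := by
    refine Prov.allFI ?_ step2
    simp [freeF, hW, h]
  have h1 : PC T [W, C] W := PC.hyp (by simp)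
  have h2 : PC T [W, C] C := PC.hyp (by simp)
  have : PC T [W, C] (Formula.allF a X) := PC.mp (PC.ofProv step3) (PC.andI h1 h2)
  exact this

theorem ctx_all_dist_N {T : Set Formula} {n : ℕ} {A : Formula} :
    ∀ Γ : List Formula, (∀ C ∈ Γ, n ∉ freeN C) →
    Prov T ((Formula.allN n (ctxImp Γ A)).imp (ctxImp Γ (Formula.allN n A)))
  | [], _ => Prov.imp_refl
  | C :: Δ, h => by
    have ih := ctx_all_dist_N (T := T) (n := n) (A := A) Δ (fun D hD => h D (by simp [hD]))
    exact Prov.imp_trans (d1_N (h C (by simp))) (Prov.b_under ih)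

theorem ctx_all_dist_F {T : Set Formula} {a : ℕ} {A : Formula} :
    ∀ Γ : List Formula, (∀ C ∈ Γ, a ∉ freeF C) →
    Prov T ((Formula.allF a (ctxImp Γ A)).imp (ctxImp Γ (Formula.allF a A)))
  | [], _ => Prov.imp_refl
  | C :: Δ, h => by
    have ih := ctx_all_dist_F (T := T) (a := a) (A := A) Δ (fun D hD => h D (by simp [hD]))
    exact Prov.imp_trans (d1_F (h C (by simp))) (Prov.b_under ih)

namespace PC

variable {T : Set Formula} {Γ : List Formula} {A B : Formula}

theorem genN {n : ℕ} (hΓ : ∀ C ∈ Γ, n ∉ freeN C) (h : PC T Γ A) :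
    PC T Γ (Formula.allN n A) :=
  Prov.mp (ctx_all_dist_N Γ hΓ) (Prov.genN h)

theorem genF {a : ℕ} (hΓ : ∀ C ∈ Γ, a ∉ freeF C) (h : PC T Γ A) :
    PC T Γ (Formula.allF a A) :=
  Prov.mp (ctx_all_dist_F Γ hΓ) (Prov.genF h)

theorem specN {n : ℕ} (h : PC T Γ (Formula.allN n A)) : PC T Γ A :=
  mp (ofProv Prov.allNE_self) h

theorem specF {a : ℕ} (h : PC T Γ (Formula.allF a A)) : PC T Γ A :=
  mp (ofProv Prov.allFE_self) h

theorem allNE {n : ℕ} {u : Term} (hu : FreeForN u n A) (h : PC T Γ (Formula.allN n A)) :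
    PC T Γ (subN n u A) :=
  mp (ofProv (Prov.allNE hu)) h

theorem allFE {a : ℕ} {ψ : Func} (hψ : FreeForF ψ a A) (h : PC T Γ (Formula.allF a A)) :
    PC T Γ (subF a ψ A) :=
  mp (ofProv (Prov.allFE hψ)) h

theorem exNI {n : ℕ} {u : Term} (hu : FreeForN u n A) (h : PC T Γ (subN n u A)) :
    PC T Γ (Formula.exN n A) :=
  mp (ofProv (Prov.exNI hu)) h

theorem exFI {a : ℕ} {ψ : Func} (hψ : FreeForF ψ a A) (h : PC T Γ (subF a ψ A)) :
    PC T Γ (Formula.exF a A) :=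
  mp (ofProv (Prov.exFI hψ)) h

theorem exNI_self {n : ℕ} (h : PC T Γ A) : PC T Γ (Formula.exN n A) :=
  mp (ofProv Prov.exNI_self) h

theorem exFI_self {a : ℕ} (h : PC T Γ A) : PC T Γ (Formula.exF a A) :=
  mp (ofProv Prov.exFI_self) h

end PC

theorem exNE_obj {T : Set Formula} {n : ℕ} {A B : Formula} (hB : n ∉ freeN B) :
    Prov T ((Formula.allN n (A.imp B)).imp ((Formula.exN n A).imp B)) := by
  set W : Formula := Formula.allN n (A.imp B) with hW
  have swap1 : Prov T (A.imp (W.imp B)) := by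
    have h1 : PC T [A, W] W := PC.hyp (by simp)
    have h2 : PC T [A, W] A := PC.hyp (by simp)
    have h3 : PC T [A, W] (A.imp B) :=
      PC.mp (PC.ofProv (Prov.allNE_self (n := n) (A := A.imp B))) h1
    exact PC.mp h3 h2
  have h2 : Prov T ((Formula.exN n A).imp (W.imp B)) := by
    refine Prov.exNE ?_ swap1
    simp [freeN, hW, hB]
  have h3 : PC T [W, Formula.exN n A] (Formula.exN n A) := PC.hyp (by simp)
  have h4 : PC T [W, Formula.exN n A] W := PC.hyp (by simp)
  have : PC T [W, Formula.exN n A] B := PC.mp (PC.mp (PC.ofProv h2) h3) h4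
  exact this

theorem exFE_obj {T : Set Formula} {a : ℕ} {A B : Formula} (hB : a ∉ freeF B) :
    Prov T ((Formula.allF a (A.imp B)).imp ((Formula.exF a A).imp B)) := by
  set W : Formula := Formula.allF a (A.imp B) with hW
  have swap1 : Prov T (A.imp (W.imp B)) := by
    have h1 : PC T [A, W] W := PC.hyp (by simp)
    have h2 : PC T [A, W] A := PC.hyp (by simp)
    have h3 : PC T [A, W] (A.imp B) :=
      PC.mp (PC.ofProv (Prov.allFE_self (a := a) (A := A.imp B))) h1
    exact PC.mp h3 h2
  have h2 : Prov T ((Formula.exF a A).imp (W.imp B)) := by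
    refine Prov.exFE ?_ swap1
    simp [freeF, hW, hB]
  have h3 : PC T [W, Formula.exF a A] (Formula.exF a A) := PC.hyp (by simp)
  have h4 : PC T [W, Formula.exF a A] W := PC.hyp (by simp)
  have : PC T [W, Formula.exF a A] B := PC.mp (PC.mp (PC.ofProv h2) h3) h4
  exact this

namespace PC

variable {T : Set Formula} {Γ : List Formula} {A B : Formula}

theorem exNE {n : ℕ} (hB : n ∉ freeN B) (hΓ : ∀ C ∈ Γ, n ∉ freeN C)
    (h : PC T Γ (Formula.exN n A)) (h2 : PC T (Γ ++ [A]) B) : PC T Γ B :=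
  mp (mp (ofProv (exNE_obj hB)) (genN hΓ (intro h2))) h

theorem exFE {a : ℕ} (hB : a ∉ freeF B) (hΓ : ∀ C ∈ Γ, a ∉ freeF C)
    (h : PC T Γ (Formula.exF a A)) (h2 : PC T (Γ ++ [A]) B) : PC T Γ B :=
  mp (mp (ofProv (exFE_obj hB)) (genF hΓ (intro h2))) h

end PC


/-! ### IA₁ membership helpers and equality reasoning -/

theorem mem_IA1_valid {s t : Term} (h : ∀ ρ σ, evalT ρ σ s = evalT ρ σ t) :
    Formula.eq s t ∈ IA1 :=
  Or.inl (Or.inl (Or.inl (Or.inl ⟨s, t, rfl, h⟩)))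

theorem mem_IA1_eqAx {n : ℕ} {s t : Term} {A : Formula}
    (hs : FreeForN s n A) (ht : FreeForN t n A) :
    (Formula.eq s t).imp ((subN n s A).imp (subN n t A)) ∈ IA1 :=
  Or.inl (Or.inl (Or.inl (Or.inr ⟨n, s, t, A, hs, ht, rfl⟩)))

theorem mem_IA1_sucInj {s t : Term} :
    (Formula.eq (Term.succ s) (Term.succ t)).imp (.eq s t) ∈ IA1 :=
  Or.inl (Or.inl (Or.inr (Or.inl ⟨s, t, rfl⟩)))

theorem mem_IA1_sucNe {t : Term} :
    Formula.neg (.eq (Term.succ t) Term.zero) ∈ IA1 :=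
  Or.inl (Or.inl (Or.inr (Or.inr ⟨t, rfl⟩)))

theorem mem_IA1_ind {x : ℕ} {A : Formula} :
    ((subN x Term.zero A).and
      (Formula.allN x (A.imp (subN x (Term.succ (Term.var x)) A)))).imp
        (Formula.allN x A) ∈ IA1 :=
  Or.inl (Or.inr ⟨x, A, rfl⟩)

namespace PC

variable {T : Set Formula} {Γ : List Formula}

theorem valid (hT : IA1 ⊆ T) {s t : Term} (h : ∀ ρ σ, evalT ρ σ s = evalT ρ σ t) :
    PC T Γ (Formula.eq s t) :=
  ofProv (Prov.ax (hT (mem_IA1_valid h)))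

theorem eqRefl (hT : IA1 ⊆ T) {t : Term} : PC T Γ (Formula.eq t t) :=
  valid hT (fun _ _ => rfl)

theorem leib (hT : IA1 ⊆ T) {n : ℕ} {s t : Term} (A : Formula)
    (hs : FreeForN s n A) (ht : FreeForN t n A)
    (heq : PC T Γ (Formula.eq s t)) (h : PC T Γ (subN n s A)) : PC T Γ (subN n t A) :=
  mp (mp (ofProv (Prov.ax (hT (mem_IA1_eqAx hs ht)))) heq) h

theorem eqSym (hT : IA1 ⊆ T) {s t : Term} (heq : PC T Γ (Formula.eq s t)) :
    PC T Γ (Formula.eq t s) := by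
  obtain ⟨n, hns, hnt⟩ := exists_fresh s t
  have hffs : tFForN s n s := tFForN_of_not_free s n s hns
  have hfft : tFForN t n s := tFForN_of_not_free t n s hns
  have h0 : PC T Γ (subN n s (Formula.eq (Term.var n) s)) := by
    have e1 : subN n s (Formula.eq (Term.var n) s) = Formula.eq s s := by
      simp [subN, tSubN, tSubN_of_not_free n s s hns]
    rw [e1]; exact eqRefl hT
  have h1 := leib hT (Formula.eq (Term.var n) s) ⟨trivial, hffs⟩ ⟨trivial, hfft⟩ heq h0
  have e2 : subN n t (Formula.eq (Term.var n) s) = Formula.eq t s := by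
    simp [subN, tSubN, tSubN_of_not_free n t s hns]
  rwa [e2] at h1

theorem eqTrans (hT : IA1 ⊆ T) {s t u : Term}
    (h1 : PC T Γ (Formula.eq s t)) (h2 : PC T Γ (Formula.eq t u)) :
    PC T Γ (Formula.eq s u) := by
  obtain ⟨n, hns, _⟩ := exists_fresh s s
  have h0 : PC T Γ (subN n t (Formula.eq s (Term.var n))) := by
    have e1 : subN n t (Formula.eq s (Term.var n)) = Formula.eq s t := by
      simp [subN, tSubN, tSubN_of_not_free n t s hns]
    rw [e1]; exact h1
  have h3 := leib hT (Formula.eq s (Term.var n))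
    ⟨tFForN_of_not_free t n s hns, trivial⟩ ⟨tFForN_of_not_free u n s hns, trivial⟩ h2 h0
  have e2 : subN n u (Formula.eq s (Term.var n)) = Formula.eq s u := by
    simp [subN, tSubN, tSubN_of_not_free n u s hns]
  rwa [e2] at h3

end PC

/-! ### Arithmetic lemmas in IA₁ -/

section Arith

variable {T : Set Formula} {Γ : List Formula}

/-- Decidability of t = 0, by a single induction. -/
theorem decZ (hT : IA1 ⊆ T) (u : Term) :
    PC T Γ ((Formula.eq u Term.zero).or (Formula.neg (Formula.eq u Term.zero))) := by
  set A : Formula :=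
    (Formula.eq (Term.var 0) Term.zero).or (Formula.neg (Formula.eq (Term.var 0) Term.zero))
    with hA
  have base : Prov T (subN 0 Term.zero A) := by
    have e : subN 0 Term.zero A =
        (Formula.eq Term.zero Term.zero).or (Formula.neg (Formula.eq Term.zero Term.zero)) := by
      simp [hA, subN, tSubN, Formula.neg]
    rw [e]
    exact Prov.mp Prov.orI1 (Prov.ax (hT (mem_IA1_valid (fun _ _ => rfl))))
  have step : Prov T (Formula.allN 0 (A.imp (subN 0 (Term.succ (Term.var 0)) A))) := by
    have e : subN 0 (Term.succ (Term.var 0)) A =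
        (Formula.eq (Term.succ (Term.var 0)) Term.zero).or
          (Formula.neg (Formula.eq (Term.succ (Term.var 0)) Term.zero)) := by
      simp [hA, subN, tSubN, Formula.neg]
    refine Prov.genN ?_
    rw [e]
    exact Prov.mp Prov.k (Prov.mp Prov.orI2 (Prov.ax (hT mem_IA1_sucNe)))
  have ind : Prov T (Formula.allN 0 A) :=
    Prov.mp (Prov.ax (hT mem_IA1_ind))
      (Prov.mp (Prov.mp Prov.andI base) step)
  have hFF : FreeForN u 0 A := ⟨⟨trivial, trivial⟩, ⟨trivial, trivial⟩, trivial⟩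
  have inst := Prov.mp (Prov.allNE hFF) ind
  have e2 : subN 0 u A =
      (Formula.eq u Term.zero).or (Formula.neg (Formula.eq u Term.zero)) := by
    simp [hA, subN, tSubN, Formula.neg]
  rw [e2] at inst
  exact PC.ofProv inst

/-- Stability of t = 0. -/
theorem stabZ (hT : IA1 ⊆ T) {u : Term}
    (h : PC T Γ (Formula.nneg (Formula.eq u Term.zero))) :
    PC T Γ (Formula.eq u Term.zero) := by
  refine PC.orE (decZ hT u) (PC.hyp (by simp)) ?_
  exact PC.exfalso (PC.negE (PC.weak1 h) (PC.hyp (by simp)))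

/-- u ≤ v and v ≤ u imply u = v (via min-terms; no induction). -/
theorem eq_of_le_le (hT : IA1 ⊆ T) {s t : Term}
    (h1 : PC T Γ (Formula.eq (Term.sub s t) Term.zero))
    (h2 : PC T Γ (Formula.eq (Term.sub t s) Term.zero)) :
    PC T Γ (Formula.eq s t) := by
  obtain ⟨n, hns, hnt⟩ := exists_fresh s t
  have hna : (n : ℕ) ∉ tFN (Term.sub s t) := by simp [tFN, hns, hnt]
  have hnb : (n : ℕ) ∉ tFN (Term.sub t s) := by simp [tFN, hns, hnt]
  -- v3 : s ∸ (s ∸ t) = t ∸ (t ∸ s)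
  have v3 : PC T Γ (Formula.eq (Term.sub s (Term.sub s t)) (Term.sub t (Term.sub t s))) :=
    PC.valid hT (by intro ρ σ; simp [evalT]; omega)
  -- rewrite s∸t to 0
  set A3 : Formula := Formula.eq (Term.sub s (Term.var n)) (Term.sub t (Term.sub t s)) with hA3
  have e3 : subN n (Term.sub s t) A3 =
      Formula.eq (Term.sub s (Term.sub s t)) (Term.sub t (Term.sub t s)) := by
    simp [hA3, subN, tSubN, tSubN_of_not_free n _ s hns, tSubN_of_not_free n _ t hnt,
      tSubN_of_not_free n _ _ hnb]
  have h3 := PC.leib hT A3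
    ⟨⟨tFForN_of_not_free _ n s hns, trivial⟩, tFForN_of_not_free _ n _ (by simp [tFN, hns, hnt])⟩
    ⟨⟨tFForN_of_not_free _ n s hns, trivial⟩, tFForN_of_not_free _ n _ (by simp [tFN, hns, hnt])⟩
    h1 (by rw [e3]; exact v3)
  have e3' : subN n Term.zero A3 =
      Formula.eq (Term.sub s Term.zero) (Term.sub t (Term.sub t s)) := by
    simp [hA3, subN, tSubN, tSubN_of_not_free n _ s hns, tSubN_of_not_free n _ t hnt,
      tSubN_of_not_free n _ _ hnb]
  rw [e3'] at h3
  have h4 : PC T Γ (Formula.eq s (Term.sub t (Term.sub t s))) :=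
    PC.eqTrans hT (PC.valid hT (by intro ρ σ; simp [evalT])) h3
  -- rewrite t∸s to 0
  set A4 : Formula := Formula.eq s (Term.sub t (Term.var n)) with hA4
  have e4 : subN n (Term.sub t s) A4 = Formula.eq s (Term.sub t (Term.sub t s)) := by
    simp [hA4, subN, tSubN, tSubN_of_not_free n _ s hns, tSubN_of_not_free n _ t hnt,
      tSubN_of_not_free n _ _ hnb]
  have h5 := PC.leib hT A4
    ⟨tFForN_of_not_free _ n s hns, ⟨tFForN_of_not_free _ n t hnt, trivial⟩⟩
    ⟨tFForN_of_not_free _ n s hns, ⟨tFForN_of_not_free _ n t hnt, trivial⟩⟩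
    h2 (by rw [e4]; exact h4)
  have e4' : subN n Term.zero A4 = Formula.eq s (Term.sub t Term.zero) := by
    simp [hA4, subN, tSubN, tSubN_of_not_free n _ s hns, tSubN_of_not_free n _ t hnt]
  rw [e4'] at h5
  exact PC.eqTrans hT h5 (PC.valid hT (by intro ρ σ; simp [evalT]))

/-- From a + b = 0 infer a = 0 (schematically, via valid equations). -/
theorem add_eq_zero_left (hT : IA1 ⊆ T) {a b : Term}
    (h : PC T Γ (Formula.eq (Term.add a b) Term.zero)) :
    PC T Γ (Formula.eq a Term.zero) := by
  obtain ⟨n, hna, hnb⟩ := exists_fresh a b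
  have hnd : (n : ℕ) ∉ tFN (Term.add a b) := by simp [tFN, hna, hnb]
  set A : Formula := Formula.eq (Term.sub a (Term.var n)) Term.zero with hA
  have e1 : subN n (Term.add a b) A =
      Formula.eq (Term.sub a (Term.add a b)) Term.zero := by
    simp [hA, subN, tSubN, tSubN_of_not_free n _ a hna, tSubN_of_not_free n _ _ hnd]
  have h1 := PC.leib hT A
    ⟨⟨tFForN_of_not_free _ n a hna, trivial⟩, trivial⟩
    ⟨⟨tFForN_of_not_free _ n a hna, trivial⟩, trivial⟩
    h (by rw [e1]; exact PC.valid hT (by intro ρ σ; simp only [evalT]; omega))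
  have e2 : subN n Term.zero A = Formula.eq (Term.sub a Term.zero) Term.zero := by
    simp [hA, subN, tSubN, tSubN_of_not_free n _ a hna]
  rw [e2] at h1
  exact PC.eqTrans hT (PC.valid hT (by intro ρ σ; simp [evalT])) h1

theorem add_eq_zero_right (hT : IA1 ⊆ T) {a b : Term}
    (h : PC T Γ (Formula.eq (Term.add a b) Term.zero)) :
    PC T Γ (Formula.eq b Term.zero) := by
  obtain ⟨n, hna, hnb⟩ := exists_fresh a b
  have hnd : (n : ℕ) ∉ tFN (Term.add a b) := by simp [tFN, hna, hnb]
  set A : Formula := Formula.eq (Term.sub b (Term.var n)) Term.zero with hA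
  have e1 : subN n (Term.add a b) A =
      Formula.eq (Term.sub b (Term.add a b)) Term.zero := by
    simp [hA, subN, tSubN, tSubN_of_not_free n _ b hnb, tSubN_of_not_free n _ _ hnd]
  have h1 := PC.leib hT A
    ⟨⟨tFForN_of_not_free _ n b hnb, trivial⟩, trivial⟩
    ⟨⟨tFForN_of_not_free _ n b hnb, trivial⟩, trivial⟩
    h (by rw [e1]; exact PC.valid hT (by intro ρ σ; simp only [evalT]; omega))
  have e2 : subN n Term.zero A = Formula.eq (Term.sub b Term.zero) Term.zero := by
    simp [hA, subN, tSubN, tSubN_of_not_free n _ b hnb]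
  rw [e2] at h1
  exact PC.eqTrans hT (PC.valid hT (by intro ρ σ; simp [evalT])) h1

/-- Stability of arbitrary equations. -/
theorem stabEq (hT : IA1 ⊆ T) {s t : Term}
    (h : PC T Γ (Formula.nneg (Formula.eq s t))) : PC T Γ (Formula.eq s t) := by
  obtain ⟨n, hns, hnt⟩ := exists_fresh s t
  set d : Term := Term.add (Term.sub s t) (Term.sub t s) with hd
  have imp1 : Prov T ((Formula.eq s t).imp (Formula.eq d Term.zero)) := by
    have h0 : PC T [Formula.eq s t] (Formula.eq s t) := PC.hyp (by simp)
    set A : Formula :=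
      Formula.eq (Term.add (Term.sub s (Term.var n)) (Term.sub (Term.var n) s)) Term.zero
      with hA
    have e1 : subN n s A =
        Formula.eq (Term.add (Term.sub s s) (Term.sub s s)) Term.zero := by
      simp [hA, subN, tSubN, tSubN_of_not_free n _ s hns]
    have h1 := PC.leib hT A
      ⟨⟨⟨tFForN_of_not_free _ n s hns, trivial⟩, trivial, tFForN_of_not_free _ n s hns⟩, trivial⟩
      ⟨⟨⟨tFForN_of_not_free _ n s hns, trivial⟩, trivial, tFForN_of_not_free _ n s hns⟩, trivial⟩
      h0 (by rw [e1]; exact PC.valid hT (by intro ρ σ; simp [evalT]))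
    have e2 : subN n t A = Formula.eq d Term.zero := by
      simp [hA, hd, subN, tSubN, tSubN_of_not_free n _ s hns]
    rwa [e2] at h1
  have imp2 : Prov T ((Formula.eq d Term.zero).imp (Formula.eq s t)) := by
    have h0 : PC T [Formula.eq d Term.zero] (Formula.eq d Term.zero) := PC.hyp (by simp)
    exact eq_of_le_le hT (add_eq_zero_left hT h0) (add_eq_zero_right hT h0)
  exact PC.mp (PC.ofProv imp2) (stabZ hT (PC.nn_map imp1 h))

/-- u ≤ v → u ≤ v+1. -/
theorem le_succ (hT : IA1 ⊆ T) {u v : Term}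
    (h : PC T Γ (Formula.eq (Term.sub u v) Term.zero)) :
    PC T Γ (Formula.eq (Term.sub u (Term.succ v)) Term.zero) := by
  obtain ⟨n, hnu, hnv⟩ := exists_fresh u v
  set A : Formula :=
    Formula.eq (Term.sub u (Term.succ v)) (Term.sub (Term.var n) (Term.succ Term.zero))
    with hA
  have e1 : subN n (Term.sub u v) A =
      Formula.eq (Term.sub u (Term.succ v))
        (Term.sub (Term.sub u v) (Term.succ Term.zero)) := by
    simp [hA, subN, tSubN, tSubN_of_not_free n _ u hnu, tSubN_of_not_free n _ v hnv]
  have hffl : tFForN (Term.sub u v) n (Term.sub u (Term.succ v)) :=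
    tFForN_of_not_free _ n _ (by simp [tFN, hnu, hnv])
  have h1 := PC.leib hT A
    ⟨hffl, trivial, trivial⟩
    ⟨tFForN_of_not_free _ n _ (by simp [tFN, hnu, hnv]), trivial, trivial⟩
    h (by rw [e1]; exact PC.valid hT (by intro ρ σ; simp only [evalT]; omega))
  have e2 : subN n Term.zero A =
      Formula.eq (Term.sub u (Term.succ v)) (Term.sub Term.zero (Term.succ Term.zero)) := by
    simp [hA, subN, tSubN, tSubN_of_not_free n _ u hnu, tSubN_of_not_free n _ v hnv]
  rw [e2] at h1
  exact PC.eqTrans hT h1 (PC.valid hT (by intro ρ σ; simp [evalT]))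

/-- Every number is 0 or a successor (of its predecessor). -/
theorem succ_pred (hT : IA1 ⊆ T) (u : Term) :
    PC T Γ ((Formula.eq u Term.zero).or
      (Formula.eq u (Term.succ (Term.sub u (Term.succ Term.zero))))) := by
  set A : Formula := (Formula.eq (Term.var 0) Term.zero).or
    (Formula.eq (Term.var 0) (Term.succ (Term.sub (Term.var 0) (Term.succ Term.zero))))
    with hA
  have base : Prov T (subN 0 Term.zero A) := by
    have e : subN 0 Term.zero A = (Formula.eq Term.zero Term.zero).or
        (Formula.eq Term.zero (Term.succ (Term.sub Term.zero (Term.succ Term.zero)))) := by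
      simp [hA, subN, tSubN]
    rw [e]
    exact Prov.mp Prov.orI1 (Prov.ax (hT (mem_IA1_valid (fun _ _ => rfl))))
  have step : Prov T (Formula.allN 0 (A.imp (subN 0 (Term.succ (Term.var 0)) A))) := by
    have e : subN 0 (Term.succ (Term.var 0)) A =
        (Formula.eq (Term.succ (Term.var 0)) Term.zero).or
        (Formula.eq (Term.succ (Term.var 0))
          (Term.succ (Term.sub (Term.succ (Term.var 0)) (Term.succ Term.zero)))) := by
      simp [hA, subN, tSubN]
    refine Prov.genN ?_
    rw [e]
    refine Prov.mp Prov.k (Prov.mp Prov.orI2 ?_)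
    -- ⊢ S x = S (S x ∸ 1)
    have w : PC T ([] : List Formula)
        (Formula.eq (Term.var 0) (Term.sub (Term.succ (Term.var 0)) (Term.succ Term.zero))) :=
      PC.valid hT (by intro ρ σ; simp only [evalT]; omega)
    set A' : Formula := Formula.eq (Term.succ (Term.var 0)) (Term.succ (Term.var 1)) with hA'
    have e1 : subN 1 (Term.var 0) A' =
        Formula.eq (Term.succ (Term.var 0)) (Term.succ (Term.var 0)) := by
      simp [hA', subN, tSubN]
    have h1 := PC.leib (Γ := ([] : List Formula)) hT A'
      ⟨trivial, trivial⟩ ⟨trivial, trivial⟩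
      w (by rw [e1]; exact PC.eqRefl hT)
    have e2 : subN 1 (Term.sub (Term.succ (Term.var 0)) (Term.succ Term.zero)) A' =
        Formula.eq (Term.succ (Term.var 0))
          (Term.succ (Term.sub (Term.succ (Term.var 0)) (Term.succ Term.zero))) := by
      simp [hA', subN, tSubN]
    rw [e2] at h1
    exact h1
  have ind : Prov T (Formula.allN 0 A) :=
    Prov.mp (Prov.ax (hT mem_IA1_ind)) (Prov.mp (Prov.mp Prov.andI base) step)
  have hFF : FreeForN u 0 A :=
    ⟨⟨trivial, trivial⟩, trivial, trivial, trivial⟩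
  have inst := Prov.mp (Prov.allNE hFF) ind
  have e2 : subN 0 u A = (Formula.eq u Term.zero).or
      (Formula.eq u (Term.succ (Term.sub u (Term.succ Term.zero)))) := by
    simp [hA, subN, tSubN]
  rw [e2] at inst
  exact PC.ofProv inst

/-- From (c+1)·b = 0 infer b = 0. -/
theorem mul_succ_zero (hT : IA1 ⊆ T) {c b : Term}
    (h : PC T Γ (Formula.eq (Term.mul (Term.succ c) b) Term.zero)) :
    PC T Γ (Formula.eq b Term.zero) := by
  obtain ⟨n, hnb, hnm⟩ := exists_fresh b (Term.mul (Term.succ c) b)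
  set A : Formula := Formula.eq (Term.sub b (Term.var n)) Term.zero with hA
  have e1 : subN n (Term.mul (Term.succ c) b) A =
      Formula.eq (Term.sub b (Term.mul (Term.succ c) b)) Term.zero := by
    simp [hA, subN, tSubN, tSubN_of_not_free n _ b hnb, tSubN_of_not_free n _ _ hnm]
  have hv : PC T Γ (Formula.eq (Term.sub b (Term.mul (Term.succ c) b)) Term.zero) := by
    refine PC.valid hT ?_
    intro ρ σ
    simp only [evalT]
    exact Nat.sub_eq_zero_of_le (Nat.le_mul_of_pos_left _ (Nat.succ_pos _))
  have h1 := PC.leib hT A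
    ⟨⟨tFForN_of_not_free _ n b hnb, trivial⟩, trivial⟩
    ⟨⟨tFForN_of_not_free _ n b hnb, trivial⟩, trivial⟩
    h (by rw [e1]; exact hv)
  have e2 : subN n Term.zero A = Formula.eq (Term.sub b Term.zero) Term.zero := by
    simp [hA, subN, tSubN, tSubN_of_not_free n _ b hnb]
  rw [e2] at h1
  exact PC.eqTrans hT (PC.valid hT (by intro ρ σ; simp [evalT])) h1

/-- u ≤ v+1 → (u ≤ v ∨ u = v+1). -/
theorem le_succ_cases (hT : IA1 ⊆ T) {u v : Term}
    (h : PC T Γ (Formula.eq (Term.sub u (Term.succ v)) Term.zero)) :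
    PC T Γ ((Formula.eq (Term.sub u v) Term.zero).or (Formula.eq u (Term.succ v))) := by
  refine PC.orE (succ_pred hT (Term.sub u v)) (PC.orI1 (PC.hyp (by simp))) ?_
  refine PC.orI2 ?_
  set Γ' := Γ ++ [Formula.eq (Term.sub u v)
    (Term.succ (Term.sub (Term.sub u v) (Term.succ Term.zero)))] with hΓ'
  have heq2 : PC T Γ' (Formula.eq (Term.sub u v)
      (Term.succ (Term.sub (Term.sub u v) (Term.succ Term.zero)))) := PC.hyp (by simp [hΓ'])
  obtain ⟨n, hnu, hnv⟩ := exists_fresh u v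
  have hnr : (n : ℕ) ∉ tFN (Term.sub (Term.succ v) u) := by simp [tFN, hnu, hnv]
  have hnl : (n : ℕ) ∉ tFN (Term.sub u v) := by simp [tFN, hnu, hnv]
  set c : Term := Term.sub (Term.sub u v) (Term.succ Term.zero) with hc
  have hnc : (n : ℕ) ∉ tFN (Term.succ c) := by simp [hc, tFN, hnu, hnv]
  set A : Formula := Formula.eq (Term.mul (Term.var n) (Term.sub (Term.succ v) u)) Term.zero
    with hA
  have e1 : subN n (Term.sub u v) A =
      Formula.eq (Term.mul (Term.sub u v) (Term.sub (Term.succ v) u)) Term.zero := by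
    simp [hA, subN, tSubN, tSubN_of_not_free n (Term.sub u v) u hnu,
      tSubN_of_not_free n (Term.sub u v) v hnv]
  have pz : PC T Γ' (Formula.eq (Term.mul (Term.sub u v) (Term.sub (Term.succ v) u)) Term.zero) := by
    refine PC.valid hT ?_
    intro ρ σ
    simp only [evalT]
    rcases Nat.lt_or_ge (evalT ρ σ u) (evalT ρ σ v + 1) with hlt | hge
    · rw [Nat.sub_eq_zero_of_le (show evalT ρ σ u ≤ evalT ρ σ v by omega), Nat.zero_mul]
    · rw [Nat.sub_eq_zero_of_le hge, Nat.mul_zero]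
  have h1 := PC.leib hT A
    ⟨⟨trivial, tFForN_of_not_free _ n _ hnr⟩, trivial⟩
    ⟨⟨trivial, tFForN_of_not_free _ n _ hnr⟩, trivial⟩
    heq2 (by rw [e1]; exact pz)
  have e2 : subN n (Term.succ c) A =
      Formula.eq (Term.mul (Term.succ c) (Term.sub (Term.succ v) u)) Term.zero := by
    simp [hA, subN, tSubN, tSubN_of_not_free n (Term.succ c) u hnu,
      tSubN_of_not_free n (Term.succ c) v hnv]
  rw [e2] at h1
  have h2 : PC T Γ' (Formula.eq (Term.sub (Term.succ v) u) Term.zero) :=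
    mul_succ_zero hT h1
  exact eq_of_le_le hT (PC.weak1 h) h2

end Arith


/-! ### Properties of the Gödel–Gentzen translation -/

theorem Prov.map_axioms {T₁ T₂ : Set Formula} (hax : ∀ A ∈ T₁, Prov T₂ A) :
    ∀ {B : Formula}, Prov T₁ B → Prov T₂ B := by
  intro B h
  induction h with
  | ax h => exact hax _ h
  | k => exact Prov.k
  | s => exact Prov.s
  | andI => exact Prov.andI
  | andE1 => exact Prov.andE1
  | andE2 => exact Prov.andE2
  | orI1 => exact Prov.orI1
  | orI2 => exact Prov.orI2
  | orE => exact Prov.orE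
  | exfalso => exact Prov.exfalso
  | mp _ _ ih1 ih2 => exact Prov.mp ih1 ih2
  | allNE h => exact Prov.allNE h
  | allNI h _ ih => exact Prov.allNI h ih
  | exNI h => exact Prov.exNI h
  | exNE h _ ih => exact Prov.exNE h ih
  | allFE h => exact Prov.allFE h
  | allFI h _ ih => exact Prov.allFI h ih
  | exFI h => exact Prov.exFI h
  | exFE h _ ih => exact Prov.exFE h ih
  | genN _ ih => exact Prov.genN ih
  | genF _ ih => exact Prov.genF ih

theorem freeN_gTrans : ∀ A : Formula, freeN (gTrans A) = freeN A
  | .eq s t => rfl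
  | .falsum => rfl
  | .and A B => by simp [gTrans, freeN, freeN_gTrans A, freeN_gTrans B]
  | .or A B => by
      simp [gTrans, freeN, Formula.neg, freeN_gTrans A, freeN_gTrans B]
  | .imp A B => by simp [gTrans, freeN, freeN_gTrans A, freeN_gTrans B]
  | .allN x A => by simp [gTrans, freeN, freeN_gTrans A]
  | .exN x A => by simp [gTrans, freeN, Formula.neg, freeN_gTrans A]
  | .allF a A => by simp [gTrans, freeN, freeN_gTrans A]
  | .exF a A => by simp [gTrans, freeN, Formula.neg, freeN_gTrans A]

theorem freeF_gTrans : ∀ A : Formula, freeF (gTrans A) = freeF A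
  | .eq s t => rfl
  | .falsum => rfl
  | .and A B => by simp [gTrans, freeF, freeF_gTrans A, freeF_gTrans B]
  | .or A B => by
      simp [gTrans, freeF, Formula.neg, freeF_gTrans A, freeF_gTrans B]
  | .imp A B => by simp [gTrans, freeF, freeF_gTrans A, freeF_gTrans B]
  | .allN x A => by simp [gTrans, freeF, freeF_gTrans A]
  | .exN x A => by simp [gTrans, freeF, Formula.neg, freeF_gTrans A]
  | .allF a A => by simp [gTrans, freeF, freeF_gTrans A]
  | .exF a A => by simp [gTrans, freeF, Formula.neg, freeF_gTrans A]

theorem subN_gTrans (n : ℕ) (u : Term) : ∀ A : Formula,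
    subN n u (gTrans A) = gTrans (subN n u A)
  | .eq s t => rfl
  | .falsum => rfl
  | .and A B => by simp [gTrans, subN, subN_gTrans n u A, subN_gTrans n u B]
  | .or A B => by
      simp [gTrans, subN, Formula.neg, subN_gTrans n u A, subN_gTrans n u B]
  | .imp A B => by simp [gTrans, subN, subN_gTrans n u A, subN_gTrans n u B]
  | .allN x A => by
      by_cases h : x = n <;> simp [gTrans, subN, h, subN_gTrans n u A]
  | .exN x A => by
      by_cases h : x = n <;>
        simp [gTrans, subN, Formula.neg, h, subN_gTrans n u A]
  | .allF a A => by simp [gTrans, subN, subN_gTrans n u A]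
  | .exF a A => by simp [gTrans, subN, Formula.neg, subN_gTrans n u A]

theorem subF_gTrans (a : ℕ) (ψ : Func) : ∀ A : Formula,
    subF a ψ (gTrans A) = gTrans (subF a ψ A)
  | .eq s t => rfl
  | .falsum => rfl
  | .and A B => by simp [gTrans, subF, subF_gTrans a ψ A, subF_gTrans a ψ B]
  | .or A B => by
      simp [gTrans, subF, Formula.neg, subF_gTrans a ψ A, subF_gTrans a ψ B]
  | .imp A B => by simp [gTrans, subF, subF_gTrans a ψ A, subF_gTrans a ψ B]
  | .allN x A => by simp [gTrans, subF, subF_gTrans a ψ A]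
  | .exN x A => by simp [gTrans, subF, Formula.neg, subF_gTrans a ψ A]
  | .allF b A => by
      by_cases h : b = a <;> simp [gTrans, subF, h, subF_gTrans a ψ A]
  | .exF b A => by
      by_cases h : b = a <;>
        simp [gTrans, subF, Formula.neg, h, subF_gTrans a ψ A]

theorem FreeForN_gTrans {u : Term} {n : ℕ} : ∀ {A : Formula},
    FreeForN u n A → FreeForN u n (gTrans A)
  | .eq s t, h => h
  | .falsum, _ => trivial
  | .and A B, h => ⟨FreeForN_gTrans h.1, FreeForN_gTrans h.2⟩
  | .or A B, h =>
      ⟨⟨⟨FreeForN_gTrans h.1, trivial⟩, FreeForN_gTrans h.2, trivial⟩, trivial⟩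
  | .imp A B, h => ⟨FreeForN_gTrans h.1, FreeForN_gTrans h.2⟩
  | .allN m A, h => by
      rcases h with h | h | h
      · exact Or.inl h
      · exact Or.inr (Or.inl (by rwa [freeN_gTrans]))
      · exact Or.inr (Or.inr ⟨h.1, FreeForN_gTrans h.2⟩)
  | .exN m A, h => by
      refine ⟨?_, trivial⟩
      rcases h with h | h | h
      · exact Or.inl h
      · exact Or.inr (Or.inl (by simp [freeN, Formula.neg, freeN_gTrans, h]))
      · exact Or.inr (Or.inr ⟨h.1, FreeForN_gTrans h.2, trivial⟩)
  | .allF b A, h => by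
      rcases h with h | h
      · exact Or.inl (by rwa [freeN_gTrans])
      · exact Or.inr ⟨h.1, FreeForN_gTrans h.2⟩
  | .exF b A, h => by
      refine ⟨?_, trivial⟩
      rcases h with h | h
      · exact Or.inl (by simp [freeN, Formula.neg, freeN_gTrans, h])
      · exact Or.inr ⟨h.1, FreeForN_gTrans h.2, trivial⟩

theorem FreeForF_gTrans {ψ : Func} {a : ℕ} : ∀ {A : Formula},
    FreeForF ψ a A → FreeForF ψ a (gTrans A)
  | .eq s t, h => h
  | .falsum, _ => trivial
  | .and A B, h => ⟨FreeForF_gTrans h.1, FreeForF_gTrans h.2⟩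
  | .or A B, h =>
      ⟨⟨⟨FreeForF_gTrans h.1, trivial⟩, FreeForF_gTrans h.2, trivial⟩, trivial⟩
  | .imp A B, h => ⟨FreeForF_gTrans h.1, FreeForF_gTrans h.2⟩
  | .allN m A, h => by
      rcases h with h | h
      · exact Or.inl (by rwa [freeF_gTrans])
      · exact Or.inr ⟨h.1, FreeForF_gTrans h.2⟩
  | .exN m A, h => by
      refine ⟨?_, trivial⟩
      rcases h with h | h
      · exact Or.inl (by simp [freeF, Formula.neg, freeF_gTrans, h])
      · exact Or.inr ⟨h.1, FreeForF_gTrans h.2, trivial⟩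
  | .allF b A, h => by
      rcases h with h | h | h
      · exact Or.inl h
      · exact Or.inr (Or.inl (by rwa [freeF_gTrans]))
      · exact Or.inr (Or.inr ⟨h.1, FreeForF_gTrans h.2⟩)
  | .exF b A, h => by
      refine ⟨?_, trivial⟩
      rcases h with h | h | h
      · exact Or.inl h
      · exact Or.inr (Or.inl (by simp [freeF, Formula.neg, freeF_gTrans, h]))
      · exact Or.inr (Or.inr ⟨h.1, FreeForF_gTrans h.2, trivial⟩)

/-- Stability of negations. -/
theorem neg_stab {T : Set Formula} {A : Formula} :
    Prov T ((Formula.nneg (Formula.neg A)).imp (Formula.neg A)) := by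
  have : PC T [Formula.nneg (Formula.neg A)] (Formula.neg A) :=
    PC.nneg_neg (PC.hyp (by simp))
  exact this

/-- Stability of negative translations: ⊢ ¬¬A^g → A^g. -/
theorem gStab {T : Set Formula} (hT : IA1 ⊆ T) :
    ∀ A : Formula, Prov T ((Formula.nneg (gTrans A)).imp (gTrans A))
  | .eq s t => by
      have : PC T [Formula.nneg (Formula.eq s t)] (Formula.eq s t) :=
        stabEq hT (PC.hyp (by simp))
      exact this
  | .falsum => by
      have h0 : PC T [Formula.nneg Formula.falsum]
          ((Formula.falsum.imp Formula.falsum).imp Formula.falsum) :=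
        PC.hyp (by simp [Formula.nneg, Formula.neg])
      have : PC T [Formula.nneg Formula.falsum] Formula.falsum :=
        PC.mp h0 (PC.ofProv Prov.imp_refl)
      exact this
  | .and A B => by
      have ihA := gStab hT A
      have ihB := gStab hT B
      have : PC T [Formula.nneg ((gTrans A).and (gTrans B))] ((gTrans A).and (gTrans B)) := by
        have h0 : PC T [Formula.nneg ((gTrans A).and (gTrans B))]
            (Formula.nneg ((gTrans A).and (gTrans B))) := PC.hyp (by simp)
        exact PC.andI (PC.mp (PC.ofProv ihA) (PC.nn_map Prov.andE1 h0))
          (PC.mp (PC.ofProv ihB) (PC.nn_map Prov.andE2 h0))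
      exact this
  | .or A B => neg_stab
  | .imp A B => by
      have ihB := gStab hT B
      have : PC T [Formula.nneg ((gTrans A).imp (gTrans B)), gTrans A] (gTrans B) := by
        set Γ : List Formula := [Formula.nneg ((gTrans A).imp (gTrans B)), gTrans A] with hΓ
        have nnB : PC T Γ (Formula.nneg (gTrans B)) := by
          refine PC.negI (PC.negE (PC.hyp (A := Formula.nneg ((gTrans A).imp (gTrans B)))
            (by simp [hΓ])) ?_)
          refine PC.negI (PC.negE (PC.hyp (A := Formula.neg (gTrans B)) (by simp [hΓ])) ?_)
          exact PC.mp (PC.hyp (A := (gTrans A).imp (gTrans B)) (by simp [hΓ]))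
            (PC.hyp (A := gTrans A) (by simp [hΓ]))
        exact PC.mp (PC.ofProv ihB) nnB
      exact this
  | .allN x A => by
      have ihA := gStab hT A
      have : PC T [Formula.nneg (Formula.allN x (gTrans A))] (Formula.allN x (gTrans A)) := by
        refine PC.genN ?_ ?_
        · intro C hC
          simp only [List.mem_singleton] at hC
          subst hC
          simp [Formula.nneg, Formula.neg, freeN, freeN_gTrans]
        · exact PC.mp (PC.ofProv ihA)
            (PC.nn_map (Prov.allNE_self (n := x) (A := gTrans A))
              (PC.hyp (A := Formula.nneg (Formula.allN x (gTrans A))) (by simp)))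
      exact this
  | .exN x A => neg_stab
  | .allF a A => by
      have ihA := gStab hT A
      have : PC T [Formula.nneg (Formula.allF a (gTrans A))] (Formula.allF a (gTrans A)) := by
        refine PC.genF ?_ ?_
        · intro C hC
          simp only [List.mem_singleton] at hC
          subst hC
          simp [Formula.nneg, Formula.neg, freeF, freeF_gTrans]
        · exact PC.mp (PC.ofProv ihA)
            (PC.nn_map (Prov.allFE_self (a := a) (A := gTrans A))
              (PC.hyp (A := Formula.nneg (Formula.allF a (gTrans A))) (by simp)))
      exact this
  | .exF a A => neg_stab

/-- Negative translations of the IA₁ axioms are provable from IA₁. -/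
theorem gIA1 {T : Set Formula} (hT : IA1 ⊆ T) {A : Formula} (h : A ∈ IA1) :
    Prov T (gTrans A) := by
  rcases h with (((h | h) | h) | h) | h
  · obtain ⟨s, t, rfl, hv⟩ := h
    exact Prov.ax (hT (mem_IA1_valid hv))
  · obtain ⟨n, s, t, B, hs, ht, rfl⟩ := h
    show Prov T ((Formula.eq s t).imp
      ((gTrans (subN n s B)).imp (gTrans (subN n t B))))
    rw [← subN_gTrans, ← subN_gTrans]
    exact Prov.ax (hT (mem_IA1_eqAx (FreeForN_gTrans hs) (FreeForN_gTrans ht)))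
  · rcases h with ⟨s, t, rfl⟩ | ⟨t, rfl⟩
    · exact Prov.ax (hT mem_IA1_sucInj)
    · exact Prov.ax (hT mem_IA1_sucNe)
  · obtain ⟨x, B, rfl⟩ := h
    show Prov T (((gTrans (subN x Term.zero B)).and
      (Formula.allN x ((gTrans B).imp (gTrans (subN x (Term.succ (Term.var x)) B))))).imp
        (Formula.allN x (gTrans B)))
    rw [← subN_gTrans, ← subN_gTrans]
    exact Prov.ax (hT mem_IA1_ind)
  · obtain ⟨x, t, s, hf, rfl⟩ := h
    exact Prov.ax (hT (Or.inr ⟨x, t, s, hf, rfl⟩))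

/-- Soundness of the negative translation: if S + DNE proves B, then any
extension of IA₁ proving the translations of S proves B^g. -/
theorem gThms_sound {T S : Set Formula} (hT : IA1 ⊆ T)
    (hS : ∀ A ∈ S, Prov T (gTrans A)) :
    ∀ {B : Formula}, Prov (S ∪ DNE) B → Prov T (gTrans B) := by
  intro B h
  induction h with
  | ax h =>
    rcases h with h | h
    · exact hS _ h
    · obtain ⟨X, rfl⟩ := h
      exact gStab hT X
  | k => exact Prov.k
  | s => exact Prov.s
  | andI => exact Prov.andI
  | andE1 => exact Prov.andE1
  | andE2 => exact Prov.andE2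
  | @orI1 A B =>
    have : PC T [gTrans A, (Formula.neg (gTrans A)).and (Formula.neg (gTrans B))]
        Formula.falsum :=
      PC.negE (PC.andE1 (PC.hyp (A := (Formula.neg (gTrans A)).and (Formula.neg (gTrans B)))
        (by simp))) (PC.hyp (A := gTrans A) (by simp))
    exact this
  | @orI2 A B =>
    have : PC T [gTrans B, (Formula.neg (gTrans A)).and (Formula.neg (gTrans B))]
        Formula.falsum :=
      PC.negE (PC.andE2 (PC.hyp (A := (Formula.neg (gTrans A)).and (Formula.neg (gTrans B)))
        (by simp))) (PC.hyp (A := gTrans B) (by simp))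
    exact this
  | @orE A B C =>
    set gA := gTrans A; set gB := gTrans B; set gC := gTrans C
    have : PC T [gA.imp gC, gB.imp gC,
        Formula.neg ((Formula.neg gA).and (Formula.neg gB))] gC := by
      set Γ : List Formula := [gA.imp gC, gB.imp gC,
        Formula.neg ((Formula.neg gA).and (Formula.neg gB))] with hΓ
      refine PC.mp (PC.ofProv (gStab hT C)) (PC.negI ?_)
      refine PC.negE (PC.hyp (A := Formula.neg ((Formula.neg gA).and (Formula.neg gB)))
        (by simp [hΓ])) ?_
      refine PC.andI ?_ ?_
      · refine PC.negI (PC.negE (PC.hyp (A := Formula.neg gC) (by simp [hΓ, gC])) ?_)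
        exact PC.mp (PC.hyp (A := gA.imp gC) (by simp [hΓ])) (PC.hyp (A := gA) (by simp [hΓ]))
      · refine PC.negI (PC.negE (PC.hyp (A := Formula.neg gC) (by simp [hΓ, gC])) ?_)
        exact PC.mp (PC.hyp (A := gB.imp gC) (by simp [hΓ])) (PC.hyp (A := gB) (by simp [hΓ]))
    exact this
  | exfalso => exact Prov.exfalso
  | mp _ _ ih1 ih2 => exact Prov.mp ih1 ih2
  | @allNE n A u h =>
    show Prov T ((Formula.allN n (gTrans A)).imp (gTrans (subN n u A)))
    rw [← subN_gTrans]
    exact Prov.allNE (FreeForN_gTrans h)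
  | allNI h _ ih => exact Prov.allNI (by rwa [freeN_gTrans]) ih
  | @exNI n A u h =>
    show Prov T ((gTrans (subN n u A)).imp
      (Formula.neg (Formula.allN n (Formula.neg (gTrans A)))))
    rw [← subN_gTrans]
    have : PC T [subN n u (gTrans A), Formula.allN n (Formula.neg (gTrans A))]
        Formula.falsum := by
      have h1 : PC T [subN n u (gTrans A), Formula.allN n (Formula.neg (gTrans A))]
          (subN n u (Formula.neg (gTrans A))) :=
        PC.allNE ⟨FreeForN_gTrans h, trivial⟩ (PC.hyp (by simp))
      exact PC.mp h1 (PC.hyp (A := subN n u (gTrans A)) (by simp))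
    exact this
  | @exNE n A B h _ ih =>
    show Prov T ((Formula.neg (Formula.allN n (Formula.neg (gTrans A)))).imp (gTrans B))
    set gA := gTrans A; set gB := gTrans B
    have : PC T [Formula.neg (Formula.allN n (Formula.neg gA))] gB := by
      set Γ : List Formula := [Formula.neg (Formula.allN n (Formula.neg gA))] with hΓ
      refine PC.mp (PC.ofProv (gStab hT B)) (PC.negI ?_)
      refine PC.negE (PC.hyp (A := Formula.neg (Formula.allN n (Formula.neg gA)))
        (by simp [hΓ])) ?_
      refine PC.genN ?_ ?_
      · intro C hC
        simp only [hΓ, List.mem_append, List.mem_singleton] at hC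
        rcases hC with hC | hC <;> subst hC
        · simp [Formula.neg, freeN, freeN_gTrans]
        · simp [Formula.neg, freeN, freeN_gTrans, h]
      · refine PC.negI (PC.negE (PC.hyp (A := Formula.neg gB) (by simp [hΓ, gB])) ?_)
        exact PC.mp (PC.ofProv ih) (PC.hyp (A := gA) (by simp [hΓ]))
    exact this
  | @allFE a A ψ h =>
    show Prov T ((Formula.allF a (gTrans A)).imp (gTrans (subF a ψ A)))
    rw [← subF_gTrans]
    exact Prov.allFE (FreeForF_gTrans h)
  | allFI h _ ih => exact Prov.allFI (by rwa [freeF_gTrans]) ih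
  | @exFI a A ψ h =>
    show Prov T ((gTrans (subF a ψ A)).imp
      (Formula.neg (Formula.allF a (Formula.neg (gTrans A)))))
    rw [← subF_gTrans]
    have : PC T [subF a ψ (gTrans A), Formula.allF a (Formula.neg (gTrans A))]
        Formula.falsum := by
      have h1 : PC T [subF a ψ (gTrans A), Formula.allF a (Formula.neg (gTrans A))]
          (subF a ψ (Formula.neg (gTrans A))) :=
        PC.allFE ⟨FreeForF_gTrans h, trivial⟩ (PC.hyp (by simp))
      exact PC.mp h1 (PC.hyp (A := subF a ψ (gTrans A)) (by simp))
    exact this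
  | @exFE a A B h _ ih =>
    show Prov T ((Formula.neg (Formula.allF a (Formula.neg (gTrans A)))).imp (gTrans B))
    set gA := gTrans A; set gB := gTrans B
    have : PC T [Formula.neg (Formula.allF a (Formula.neg gA))] gB := by
      set Γ : List Formula := [Formula.neg (Formula.allF a (Formula.neg gA))] with hΓ
      refine PC.mp (PC.ofProv (gStab hT B)) (PC.negI ?_)
      refine PC.negE (PC.hyp (A := Formula.neg (Formula.allF a (Formula.neg gA)))
        (by simp [hΓ])) ?_
      refine PC.genF ?_ ?_
      · intro C hC
        simp only [hΓ, List.mem_append, List.mem_singleton] at hC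
        rcases hC with hC | hC <;> subst hC
        · simp [Formula.neg, freeF, freeF_gTrans]
        · simp [Formula.neg, freeF, freeF_gTrans, h]
      · refine PC.negI (PC.negE (PC.hyp (A := Formula.neg gB) (by simp [hΓ, gB])) ?_)
        exact PC.mp (PC.ofProv ih) (PC.hyp (A := gA) (by simp [hΓ]))
    exact this
  | genN _ ih => exact Prov.genN ih
  | genF _ ih => exact Prov.genF ih


/-! ### Concrete formulas for FT₁ and GDK -/

/-- ρ(ᾱ(x)) = 0 with ρ = fvar 0, α = fvar 1, x = var 0. -/
def Ebody : Formula :=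
  .eq (Term.app (Func.fvar 0) (Term.bar (Func.fvar 1) (Term.var 0))) Term.zero

/-- B(α) for α = fvar 1. -/
def Bf : Formula := binF 1 1

/-- The hypothesis of FT₁ : ∀α_B ∃x ρ(ᾱ(x))=0. -/
def Pf : Formula := Formula.allF 1 (Bf.imp (.exN 0 Ebody))

/-- x ≤ n & ρ(ᾱ(x))=0, with n = var 2. -/
def EbodyLe : Formula := (tle (Term.var 0) (Term.var 2)).and Ebody

/-- The conclusion of FT₁. -/
def Qf : Formula := .exN 2 (.allF 1 (Bf.imp (.exN 0 EbodyLe)))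

/-- The hypothesis of GDK : ∀α_B ¬¬∃x ρ(ᾱ(x))=0. -/
def Hf : Formula := .allF 1 (Bf.imp (Formula.nneg (.exN 0 Ebody)))

/-- (Pf)^g. -/
def gPf : Formula := .allF 1 (Bf.imp (.neg (.allN 0 (.neg Ebody))))

def Vf : Formula := .allF 1 (Bf.imp (.neg (.allN 0 (.neg EbodyLe))))

def Wf : Formula := .allN 2 (.neg Vf)

def gQf : Formula := .neg Wf

theorem FT1_eq : FT1 = Formula.allF 0 (Pf.imp Qf) := rfl
theorem GDK_eq : GDK = Formula.allF 0 (Hf.imp (Formula.nneg Pf)) := rfl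
theorem gFT1_eq : gTrans FT1 = Formula.allF 0 (gPf.imp gQf) := rfl


/-! ### Bounded search over a decidable equation (concrete induction) -/

/-- ∃x(x≤n & ρ(ᾱ(x))=0) ∨ ∀x(x≤n → ¬ρ(ᾱ(x))=0), n = var 2. -/
def SAf : Formula :=
  (Formula.exN 0 EbodyLe).or
    (Formula.allN 0 ((tle (Term.var 0) (Term.var 2)).imp (Formula.neg Ebody)))

/-- Ebody with x replaced by an arbitrary term u (hole at var 9). -/
def Ehole : Formula :=
  .eq (Term.app (Func.fvar 0) (Term.bar (Func.fvar 1) (Term.var 9))) Term.zero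

theorem Ehole_sub (u : Term) : subN 9 u Ehole =
    .eq (Term.app (Func.fvar 0) (Term.bar (Func.fvar 1) u)) Term.zero := by
  simp [Ehole, subN, tSubN, fSubN]

theorem Ehole_FF (u : Term) : FreeForN u 9 Ehole := by
  simp [Ehole, FreeForN, tFForN, fFForN]

theorem Ehole_negFF (u : Term) : FreeForN u 9 (Formula.neg Ehole) := by
  simp [Ehole, Formula.neg, FreeForN, tFForN, fFForN]

/-- Transfer ρ(ᾱ(s))=0 along a provable s = t. -/
theorem posE_transfer {T : Set Formula} {Γ : List Formula} (hT : IA1 ⊆ T) {s t : Term}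
    (heq : PC T Γ (Formula.eq s t))
    (h : PC T Γ (.eq (Term.app (Func.fvar 0) (Term.bar (Func.fvar 1) s)) Term.zero)) :
    PC T Γ (.eq (Term.app (Func.fvar 0) (Term.bar (Func.fvar 1) t)) Term.zero) := by
  have h1 := PC.leib hT Ehole (Ehole_FF s) (Ehole_FF t) heq
    (by
      have e : subN 9 s Ehole =
          Formula.eq (Term.app (Func.fvar 0) (Term.bar (Func.fvar 1) s)) Term.zero := by
        simp [Ehole, subN, tSubN, fSubN]
      rw [e]; exact h)
  have e2 : subN 9 t Ehole =
      Formula.eq (Term.app (Func.fvar 0) (Term.bar (Func.fvar 1) t)) Term.zero := by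
    simp [Ehole, subN, tSubN, fSubN]
  rwa [e2] at h1

/-- Transfer ¬(ρ(ᾱ(s))=0) along a provable s = t. -/
theorem negE_transfer {T : Set Formula} {Γ : List Formula} (hT : IA1 ⊆ T) {s t : Term}
    (heq : PC T Γ (Formula.eq s t))
    (h : PC T Γ (Formula.neg (.eq (Term.app (Func.fvar 0) (Term.bar (Func.fvar 1) s)) Term.zero))) :
    PC T Γ (Formula.neg (.eq (Term.app (Func.fvar 0) (Term.bar (Func.fvar 1) t)) Term.zero)) := by
  have h1 := PC.leib hT (Formula.neg Ehole) (Ehole_negFF s) (Ehole_negFF t) heq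
    (by
      have e : subN 9 s (Formula.neg Ehole) =
          Formula.neg (.eq (Term.app (Func.fvar 0) (Term.bar (Func.fvar 1) s)) Term.zero) := by
        simp [Ehole, Formula.neg, subN, tSubN, fSubN]
      rw [e]; exact h)
  have e2 : subN 9 t (Formula.neg Ehole) =
      Formula.neg (.eq (Term.app (Func.fvar 0) (Term.bar (Func.fvar 1) t)) Term.zero) := by
    simp [Ehole, Formula.neg, subN, tSubN, fSubN]
  rwa [e2] at h1

theorem boundedSearch {T : Set Formula} {Γ : List Formula} (hT : IA1 ⊆ T) :
    PC T Γ SAf := by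
  -- by induction (in the object theory) on var 2
  have base : Prov T (subN 2 Term.zero SAf) := by
    have e0 : subN 2 Term.zero SAf =
        (Formula.exN 0 ((tle (Term.var 0) Term.zero).and Ebody)).or
          (Formula.allN 0 ((tle (Term.var 0) Term.zero).imp (Formula.neg Ebody))) := rfl
    rw [e0]
    set u0 : Term := Term.app (Func.fvar 0) (Term.bar (Func.fvar 1) Term.zero) with hu0
    refine PC.toProv (PC.orE (decZ hT u0) ?_ ?_)
    · -- ρ(ᾱ(0)) = 0 : left disjunct with witness 0
      refine PC.orI1 ?_
      refine PC.exNI (u := Term.zero) (A := (tle (Term.var 0) Term.zero).and Ebody)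
        (by simp [FreeForN, tFForN, fFForN, tle, Ebody]) ?_
      have e1 : subN 0 Term.zero ((tle (Term.var 0) Term.zero).and Ebody) =
          (tle Term.zero Term.zero).and (Formula.eq u0 Term.zero) := rfl
      rw [e1]
      exact PC.andI (PC.valid hT (fun _ _ => rfl)) (PC.hyp (by simp))
    · -- ¬ρ(ᾱ(0)) = 0 : right disjunct
      refine PC.orI2 ?_
      refine PC.genN ?_ ?_
      · intro C hC; simp at hC; subst hC
        simp [Formula.neg, freeN, hu0, tFN, fFN]
      · refine PC.intro ?_
        set Γ' : List Formula :=
          [Formula.neg (Formula.eq u0 Term.zero)] ++ [tle (Term.var 0) Term.zero] with hΓ'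
        have hle : PC T Γ' (Formula.eq (Term.sub (Term.var 0) Term.zero) Term.zero) :=
          PC.hyp (by simp [hΓ', tle])
        have hv0 : PC T Γ' (Formula.eq (Term.var 0) Term.zero) :=
          PC.eqTrans hT (PC.valid hT (by intro ρ σ; simp [evalT])) hle
        refine PC.negI ?_
        have hEb : PC T (Γ' ++ [Ebody]) Ebody := PC.hyp (by simp)
        have hE0 : PC T (Γ' ++ [Ebody]) (Formula.eq u0 Term.zero) :=
          posE_transfer hT (PC.weak1 hv0) hEb
        exact PC.negE (PC.hyp (A := Formula.neg (Formula.eq u0 Term.zero))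
          (by simp [hΓ'])) hE0
  have step : Prov T (Formula.allN 2 (SAf.imp (subN 2 (Term.succ (Term.var 2)) SAf))) := by
    have eS : subN 2 (Term.succ (Term.var 2)) SAf =
        (Formula.exN 0 ((tle (Term.var 0) (Term.succ (Term.var 2))).and Ebody)).or
          (Formula.allN 0 ((tle (Term.var 0) (Term.succ (Term.var 2))).imp
            (Formula.neg Ebody))) := rfl
    refine Prov.genN ?_
    rw [eS]
    refine PC.intro (Γ := []) ?_
    set uS : Term := Term.app (Func.fvar 0) (Term.bar (Func.fvar 1) (Term.succ (Term.var 2)))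
      with huS
    refine PC.orE (PC.hyp (A := SAf) (by simp)) ?_ ?_
    · -- case ∃x(x ≤ n & E) : weaken the bound
      refine PC.exNE (n := 0) (by simp [Formula.neg, freeN, tle, Ebody, tFN, fFN]) ?_
        (PC.hyp (A := Formula.exN 0 EbodyLe) (by simp [SAf])) ?_
      · intro C hC; simp at hC
        rcases hC with rfl | rfl <;>
          simp [SAf, EbodyLe, Ebody, Formula.neg, freeN, tle, tFN, fFN]
      · refine PC.orI1 ?_
        refine PC.exNI_self ?_
        have h1 : PC T (([] ++ [SAf]) ++ [Formula.exN 0 EbodyLe] ++ [EbodyLe]) EbodyLe :=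
          PC.hyp (by simp)
        exact PC.andI (le_succ hT (PC.andE1 h1)) (PC.andE2 h1)
    · -- case ∀x(x ≤ n → ¬E)
      set Rf : Formula := Formula.allN 0 ((tle (Term.var 0) (Term.var 2)).imp
        (Formula.neg Ebody)) with hRf
      refine PC.orE (decZ hT uS) ?_ ?_
      · -- ρ(ᾱ(n+1)) = 0 : left disjunct with witness n+1
        refine PC.orI1 ?_
        refine PC.exNI (u := Term.succ (Term.var 2))
          (A := (tle (Term.var 0) (Term.succ (Term.var 2))).and Ebody)
          (by simp [FreeForN, tFForN, fFForN, tle, Ebody]) ?_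
        have e1 : subN 0 (Term.succ (Term.var 2))
            ((tle (Term.var 0) (Term.succ (Term.var 2))).and Ebody) =
            (tle (Term.succ (Term.var 2)) (Term.succ (Term.var 2))).and
              (Formula.eq uS Term.zero) := rfl
        rw [e1]
        exact PC.andI (PC.valid hT (by intro ρ σ; simp [evalT]))
          (PC.hyp (A := Formula.eq uS Term.zero) (by simp))
      · -- ¬ρ(ᾱ(n+1)) = 0 : right disjunct
        refine PC.orI2 ?_
        refine PC.genN ?_ ?_
        · intro C hC; simp at hC
          rcases hC with rfl | rfl | rfl <;>
            simp [SAf, hRf, EbodyLe, Ebody, Formula.neg, freeN, tle, tFN, fFN, huS]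
        · refine PC.intro ?_
          set Γ' : List Formula := (([] ++ [SAf]) ++ [Rf] ++
            [Formula.neg (Formula.eq uS Term.zero)]) ++
            [tle (Term.var 0) (Term.succ (Term.var 2))] with hΓ'
          have hle : PC T Γ' (Formula.eq (Term.sub (Term.var 0) (Term.succ (Term.var 2)))
              Term.zero) := PC.hyp (by simp [hΓ', tle])
          refine PC.orE (le_succ_cases hT hle) ?_ ?_
          · -- x ≤ n : use Rf
            have h2 : PC T (Γ' ++ [Formula.eq (Term.sub (Term.var 0) (Term.var 2)) Term.zero])
                ((tle (Term.var 0) (Term.var 2)).imp (Formula.neg Ebody)) := by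
              have h3 : PC T (Γ' ++ [Formula.eq (Term.sub (Term.var 0) (Term.var 2)) Term.zero])
                  Rf := PC.hyp (by simp [hΓ'])
              exact PC.specN h3
            exact PC.mp h2 (PC.hyp (by simp [tle]))
          · -- x = n+1 : transfer ¬E(n+1) to ¬E(x)
            have hc2 : PC T (Γ' ++ [Formula.eq (Term.var 0) (Term.succ (Term.var 2))])
                (Formula.eq (Term.var 0) (Term.succ (Term.var 2))) := PC.hyp (by simp)
            refine negE_transfer hT (PC.eqSym hT hc2) ?_
            exact PC.hyp (A := Formula.neg (Formula.eq uS Term.zero)) (by simp [hΓ', huS])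
  have ind : Prov T (Formula.allN 2 SAf) :=
    Prov.mp (Prov.ax (hT mem_IA1_ind)) (Prov.mp (Prov.mp Prov.andI base) step)
  exact PC.ofProv (PC.specN (Γ := []) ind)


/-! ### Goal 2 : IA₁ + FT₁ + GDK ⊢ (FT₁)^g -/

theorem goal2 : Prov (IA1 ∪ {FT1, GDK}) (gTrans FT1) := by
  set T : Set Formula := IA1 ∪ {FT1, GDK} with hTdef
  have hT : IA1 ⊆ T := Set.subset_union_left
  have memFT1 : FT1 ∈ T := Set.mem_union_right _ (by simp)
  have memGDK : GDK ∈ T := Set.mem_union_right _ (by simp)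
  rw [gFT1_eq]
  refine Prov.genF ?_
  suffices h : PC T [gPf] gQf by exact h
  -- (1) gPf ⊢ Hf
  have h1 : PC T [gPf] Hf := by
    refine PC.genF (a := 1) ?_ ?_
    · intro C hC; simp at hC; subst hC
      simp [gPf, Bf, binF, Ebody, tle, Formula.neg, freeF, tFF, fFF]
    · refine PC.intro ?_
      have h0 : PC T ([gPf] ++ [Bf]) gPf := PC.hyp (by simp)
      have hna : PC T ([gPf] ++ [Bf]) (Formula.neg (.allN 0 (.neg Ebody))) :=
        PC.mp (PC.specF h0) (PC.hyp (A := Bf) (by simp))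
      refine PC.negI ?_
      refine PC.negE (PC.weak1 hna) ?_
      refine PC.genN (n := 0) ?_ ?_
      · intro C hC; simp at hC
        rcases hC with rfl | rfl | rfl <;>
          simp [gPf, Bf, binF, Ebody, tle, Formula.neg, freeN, tFN, fFN]
      · refine PC.negI ?_
        exact PC.negE (PC.hyp (A := Formula.neg (.exN 0 Ebody)) (by simp))
          (PC.exNI_self (PC.hyp (A := Ebody) (by simp)))
  have provHP : Prov T (Hf.imp (Formula.nneg Pf)) := by
    have hx := Prov.ax (T := T) memGDK
    rw [GDK_eq] at hx
    exact Prov.mp Prov.allFE_self hx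
  have h2 : PC T [gPf] (Formula.nneg Pf) := PC.mp (PC.ofProv provHP) h1
  have provPQ : Prov T (Pf.imp Qf) := by
    have hx := Prov.ax (T := T) memFT1
    rw [FT1_eq] at hx
    exact Prov.mp Prov.allFE_self hx
  have h4 : PC T [gPf] (Formula.nneg Qf) := PC.nn_map provPQ h2
  -- (2) ⊢ Qf → gQf
  have provQgQ : Prov T (Qf.imp gQf) := by
    suffices h : PC T [Qf, Wf] Formula.falsum by exact h
    set U : Formula := Formula.allF 1 (Bf.imp (.exN 0 EbodyLe)) with hU
    have hQ : PC T [Qf, Wf] (Formula.exN 2 U) := PC.hyp (by simp [Qf, hU])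
    refine PC.exNE (n := 2) (by simp [freeN]) ?_ hQ ?_
    · intro C hC; simp at hC
      rcases hC with rfl | rfl <;>
        simp [Qf, Wf, Vf, hU, Bf, binF, EbodyLe, Ebody, tle, Formula.neg, freeN, tFN, fFN]
    · have hW : PC T ([Qf, Wf] ++ [U]) Wf := PC.hyp (by simp)
      refine PC.negE (PC.specN hW) ?_
      refine PC.genF (a := 1) ?_ ?_
      · intro C hC; simp at hC
        rcases hC with rfl | rfl | rfl <;>
          simp [Qf, Wf, Vf, hU, Bf, binF, EbodyLe, Ebody, tle, Formula.neg, freeF, tFF, fFF]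
      · refine PC.intro ?_
        have hUspec : PC T (([Qf, Wf] ++ [U]) ++ [Bf]) (Bf.imp (.exN 0 EbodyLe)) :=
          PC.specF (PC.hyp (A := U) (by simp))
        have hex : PC T (([Qf, Wf] ++ [U]) ++ [Bf]) (.exN 0 EbodyLe) :=
          PC.mp hUspec (PC.hyp (A := Bf) (by simp))
        refine PC.negI ?_
        refine PC.exNE (n := 0) (by simp [freeN]) ?_ (PC.weak1 hex) ?_
        · intro C hC; simp at hC
          rcases hC with rfl | rfl | rfl | rfl | rfl <;>
            simp [Qf, Wf, Vf, hU, Bf, binF, EbodyLe, Ebody, tle, Formula.neg, freeN, tFN, fFN]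
        · exact PC.negE
            (PC.specN (PC.hyp (A := Formula.allN 0 (.neg EbodyLe)) (by simp)))
            (PC.hyp (A := EbodyLe) (by simp))
  have h6 : PC T [gPf] (Formula.nneg gQf) := PC.nn_map provQgQ h4
  exact PC.nneg_neg h6

/-! ### Goal 3 : IA₁ + (FT₁)^g ⊢ GDK -/

theorem goal3 : Prov (IA1 ∪ {gTrans FT1}) GDK := by
  set T : Set Formula := IA1 ∪ {gTrans FT1} with hTdef
  have hT : IA1 ⊆ T := Set.subset_union_left
  rw [GDK_eq]
  refine Prov.genF ?_
  suffices h : PC T [Hf] (Formula.nneg Pf) by exact h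
  have k1 : PC T [Hf] (gPf.imp gQf) := by
    have hx : PC T [Hf] (gTrans FT1) := PC.ax (Set.mem_union_right _ rfl)
    rw [gFT1_eq] at hx
    exact PC.specF hx
  have k2 : PC T [Hf] gPf := by
    refine PC.genF (a := 1) ?_ ?_
    · intro C hC; simp at hC; subst hC
      simp [Hf, Bf, binF, Ebody, tle, Formula.nneg, Formula.neg, freeF, tFF, fFF]
    · refine PC.intro ?_
      have hH : PC T ([Hf] ++ [Bf]) (Bf.imp (Formula.nneg (.exN 0 Ebody))) :=
        PC.specF (PC.hyp (A := Hf) (by simp))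
      have hnn : PC T ([Hf] ++ [Bf]) (Formula.nneg (.exN 0 Ebody)) :=
        PC.mp hH (PC.hyp (A := Bf) (by simp))
      refine PC.negI ?_
      refine PC.negE (PC.weak1 hnn) ?_
      refine PC.negI ?_
      refine PC.exNE (n := 0) (by simp [freeN]) ?_
        (PC.hyp (A := Formula.exN 0 Ebody) (by simp)) ?_
      · intro C hC; simp at hC
        rcases hC with rfl | rfl | rfl | rfl <;>
          simp [Hf, Bf, binF, Ebody, tle, Formula.nneg, Formula.neg, freeN, tFN, fFN]
      · exact PC.negE
          (PC.specN (PC.hyp (A := Formula.allN 0 (.neg Ebody)) (by simp)))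
          (PC.hyp (A := Ebody) (by simp))
  have k3 : PC T [Hf] gQf := PC.mp k1 k2
  refine PC.negI ?_
  refine PC.negE (PC.weak1 k3) ?_
  refine PC.genN (n := 2) ?_ ?_
  · intro C hC; simp at hC
    rcases hC with rfl | rfl <;>
      simp [Hf, Pf, Bf, binF, Ebody, tle, Formula.nneg, Formula.neg, freeN, tFN, fFN]
  · refine PC.negI ?_
    refine PC.negE (PC.hyp (A := Formula.neg Pf) (by simp)) ?_
    refine PC.genF (a := 1) ?_ ?_
    · intro C hC; simp at hC
      rcases hC with rfl | rfl | rfl <;>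
        simp [Hf, Pf, Vf, Bf, binF, Ebody, EbodyLe, tle, Formula.nneg, Formula.neg,
          freeF, tFF, fFF]
    · refine PC.intro ?_
      set Γ3 : List Formula := (([Hf] ++ [Formula.neg Pf]) ++ [Vf]) ++ [Bf] with hΓ3
      have hv : PC T Γ3 (Formula.neg (.allN 0 (.neg EbodyLe))) :=
        PC.mp (PC.specF (PC.hyp (A := Vf) (by simp [hΓ3])))
          (PC.hyp (A := Bf) (by simp [hΓ3]))
      refine PC.orE (boundedSearch hT) ?_ ?_
      · -- case ∃x(x≤n & E)
        refine PC.exNE (n := 0) (by simp [freeN, Ebody, tFN, fFN]) ?_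
          (PC.hyp (A := Formula.exN 0 EbodyLe) (by simp [SAf])) ?_
        · intro C hC; simp [hΓ3, SAf] at hC
          rcases hC with rfl | rfl | rfl | rfl | rfl <;>
            simp [Hf, Pf, Vf, Bf, binF, Ebody, EbodyLe, tle, Formula.nneg, Formula.neg,
              freeN, tFN, fFN]
        · exact PC.exNI_self (PC.andE2 (PC.hyp (A := EbodyLe) (by simp)))
      · -- case ∀x(x≤n → ¬E)
        set Rf : Formula := Formula.allN 0 ((tle (Term.var 0) (Term.var 2)).imp
          (Formula.neg Ebody)) with hRf
        refine PC.exfalso ?_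
        refine PC.negE (PC.weak1 hv) ?_
        refine PC.genN (n := 0) ?_ ?_
        · intro C hC; simp [hΓ3, hRf, SAf] at hC
          rcases hC with rfl | rfl | rfl | rfl | rfl <;>
            simp [Hf, Pf, Vf, Bf, binF, Ebody, EbodyLe, tle, Formula.nneg, Formula.neg,
              freeN, tFN, fFN]
        · refine PC.negI ?_
          have hEL : PC T ((Γ3 ++ [Rf]) ++ [EbodyLe]) EbodyLe := PC.hyp (by simp)
          exact PC.negE
            (PC.mp (PC.specN (PC.hyp (A := Rf) (by simp))) (PC.andE1 hEL))
            (PC.andE2 hEL)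


theorem statement6' :
    SameTheory (minClassExt (IA1 ∪ {FT1})) (IA1 ∪ {FT1, GDK}) ∧
    Prov (IA1 ∪ {FT1, GDK}) (gTrans FT1) ∧
    Prov (IA1 ∪ {gTrans FT1}) GDK := by
  refine ⟨?_, goal2, goal3⟩
  intro A
  constructor
  · intro h
    refine Prov.map_axioms ?_ h
    intro B hB
    rcases hB with (hB | hB) | hB
    · exact Prov.ax (Or.inl hB)
    · simp only [Set.mem_singleton_iff] at hB; subst hB
      exact Prov.ax (Set.mem_union_right _ (by simp))
    · obtain ⟨A0, hA0, rfl⟩ := hB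
      refine gThms_sound Set.subset_union_left ?_ hA0
      intro C hC
      rcases hC with hC | hC
      · exact gIA1 Set.subset_union_left hC
      · simp only [Set.mem_singleton_iff] at hC; subst hC
        exact goal2
  · intro h
    refine Prov.map_axioms ?_ h
    intro B hB
    rcases hB with hB | hB
    · exact Prov.ax (Or.inl (Or.inl hB))
    · simp only [Set.mem_insert_iff, Set.mem_singleton_iff] at hB
      rcases hB with rfl | rfl
      · exact Prov.ax (Or.inl (Or.inr rfl))
      · refine Prov.map_axioms ?_ goal3
        intro C hC
        rcases hC with hC | hC
        · exact Prov.ax (Or.inl (Or.inl hC))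
        · simp only [Set.mem_singleton_iff] at hC; subst hC
          exact Prov.ax (Or.inr ⟨FT1, Prov.ax (Or.inl (Or.inr rfl)), rfl⟩)


/-- (IA₁ + FT₁)^{+g} = IA₁ + FT₁ + GDK: IA₁ + FT₁ + GDK proves
the negative translation (FT₁)^g, and GDK is provable in IA₁ + (FT₁)^g. -/
theorem statement6 :
    SameTheory (minClassExt (IA1 ∪ {FT1})) (IA1 ∪ {FT1, GDK}) ∧
    Prov (IA1 ∪ {FT1, GDK}) (gTrans FT1) ∧
    Prov (IA1 ∪ {gTrans FT1}) GDK := statement6'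

end NegInterp
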